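/- Let r ≥ 3 be an integer and let G be a 2r-regular simple graph on n vertices, and let u, v be distinct vertices lying in the same connected component of G. Then the number of 2-edge-cuts of G that separate u and v is at most n²/(4r+2)². -/

import Mathlib

open scoped Classical

set_option linter.unusedSectionVars false
set_option linter.unusedVariables false
set_option maxHeartbeats 1000000


namespace TwoCut

variable {α : Type*} [DecidableEq α]

def Chn (C : Finset (Finset α)) : Prop := ∀ x ∈ C, ∀ y ∈ C, x ⊆ y ∨ y ⊆ x

lemma chn_subset {C D : Finset (Finset α)} (h : Chn C) (hD : D ⊆ C) : Chn D :=
  fun x hx y hy => h x (hD hx) y (hD hy)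

lemma chn_union {C D : Finset (Finset α)} (a : Finset α)
    (hC : Chn C) (hD : Chn D) (h1 : ∀ x ∈ C, x ⊆ a) (h2 : ∀ x ∈ D, a ⊆ x) :
    Chn (C ∪ D) := by
  intro x hx y hy
  rcases Finset.mem_union.1 hx with hx' | hx' <;> rcases Finset.mem_union.1 hy with hy' | hy'
  · exact hC x hx' y hy'
  · exact Or.inl ((h1 x hx').trans (h2 y hy'))
  · exact Or.inr ((h1 y hy').trans (h2 x hx'))
  · exact hD x hx' y hy'

lemma chains_pick {D C C' : Finset (Finset α)} {a b : Finset α}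
    (hcov : C ∪ C' = D) (hC : Chn C) (hC' : Chn C') (ha : a ∈ D) (hb : b ∈ D)
    (hab : ¬ a ⊆ b ∧ ¬ b ⊆ a) :
    ∃ Ca Cb, Ca ∪ Cb = D ∧ Chn Ca ∧ Chn Cb ∧ a ∈ Ca ∧ b ∈ Cb := by
  rw [← hcov] at ha hb
  rcases Finset.mem_union.1 ha with ha' | ha'
  · rcases Finset.mem_union.1 hb with hb' | hb'
    · rcases hC a ha' b hb' with h | h
      · exact absurd h hab.1
      · exact absurd h hab.2
    · exact ⟨C, C', hcov, hC, hC', ha', hb'⟩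
  · rcases Finset.mem_union.1 hb with hb' | hb'
    · exact ⟨C', C, by rw [Finset.union_comm]; exact hcov, hC', hC, ha', hb'⟩
    · rcases hC' a ha' b hb' with h | h
      · exact absurd h hab.1
      · exact absurd h hab.2

lemma dilworth2 : ∀ (N : ℕ) (K : Finset (Finset α)), K.card ≤ N →
    (∀ a ∈ K, ∀ b ∈ K, ∀ c ∈ K,
      (¬ a ⊆ b ∧ ¬ b ⊆ a) → (¬ a ⊆ c ∧ ¬ c ⊆ a) → (¬ b ⊆ c ∧ ¬ c ⊆ b) → False) →
    ∃ C₁ C₂ : Finset (Finset α), C₁ ∪ C₂ = K ∧ Chn C₁ ∧ Chn C₂ := by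
  intro N
  induction N with
  | zero =>
      intro K hK _
      have : K = ∅ := Finset.card_eq_zero.1 (Nat.le_zero.1 hK)
      subst this
      exact ⟨∅, ∅, by simp, by intro x hx; simp at hx, by intro x hx; simp at hx⟩
  | succ N ih =>
      intro K hK h3
      by_cases hch : Chn K
      · exact ⟨K, ∅, by simp, hch, by intro x hx; simp at hx⟩
      by_cases hcase : ∃ a ∈ K, ∃ b ∈ K, (¬ a ⊆ b ∧ ¬ b ⊆ a) ∧
          K.filter (fun x => x ⊆ a ∨ x ⊆ b) ≠ K ∧ K.filter (fun x => a ⊆ x ∨ b ⊆ x) ≠ K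
      · obtain ⟨a, ha, b, hb, hab, hD, hU⟩ := hcase
        set D := K.filter (fun x => x ⊆ a ∨ x ⊆ b) with hDdef
        set U := K.filter (fun x => a ⊆ x ∨ b ⊆ x) with hUdef
        have hDK : D ⊆ K := Finset.filter_subset _ _
        have hUK : U ⊆ K := Finset.filter_subset _ _
        have hDcard : D.card ≤ N := by
          have : D.card < K.card := Finset.card_lt_card (Finset.ssubset_iff_subset_ne.2 ⟨hDK, hD⟩)
          omega
        have hUcard : U.card ≤ N := by
          have : U.card < K.card := Finset.card_lt_card (Finset.ssubset_iff_subset_ne.2 ⟨hUK, hU⟩)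
          omega
        have h3D : ∀ a' ∈ D, ∀ b' ∈ D, ∀ c' ∈ D,
            (¬ a' ⊆ b' ∧ ¬ b' ⊆ a') → (¬ a' ⊆ c' ∧ ¬ c' ⊆ a') → (¬ b' ⊆ c' ∧ ¬ c' ⊆ b') → False :=
          fun a' ha' b' hb' c' hc' => h3 a' (hDK ha') b' (hDK hb') c' (hDK hc')
        have h3U : ∀ a' ∈ U, ∀ b' ∈ U, ∀ c' ∈ U,
            (¬ a' ⊆ b' ∧ ¬ b' ⊆ a') → (¬ a' ⊆ c' ∧ ¬ c' ⊆ a') → (¬ b' ⊆ c' ∧ ¬ c' ⊆ b') → False :=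
          fun a' ha' b' hb' c' hc' => h3 a' (hUK ha') b' (hUK hb') c' (hUK hc')
        obtain ⟨C, C', hcov, hCc, hCc'⟩ := ih D hDcard h3D
        have haD : a ∈ D := Finset.mem_filter.2 ⟨ha, Or.inl Finset.Subset.rfl⟩
        have hbD : b ∈ D := Finset.mem_filter.2 ⟨hb, Or.inr Finset.Subset.rfl⟩
        obtain ⟨Ca, Cb, hcovD, hCa, hCb, haCa, hbCb⟩ := chains_pick hcov hCc hCc' haD hbD hab
        obtain ⟨E, E', hcovU0, hEc, hEc'⟩ := ih U hUcard h3U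
        have haU : a ∈ U := Finset.mem_filter.2 ⟨ha, Or.inl Finset.Subset.rfl⟩
        have hbU : b ∈ U := Finset.mem_filter.2 ⟨hb, Or.inr Finset.Subset.rfl⟩
        obtain ⟨Ea, Eb, hcovU, hEa, hEb, haEa, hbEb⟩ := chains_pick hcovU0 hEc hEc' haU hbU hab
        have hbelow_a : ∀ x ∈ Ca, x ⊆ a := by
          intro x hx
          have hxD : x ∈ D := by rw [← hcovD]; exact Finset.mem_union_left _ hx
          have hxf := (Finset.mem_filter.1 hxD).2
          rcases hCa x hx a haCa with h | h
          · exact h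
          · rcases hxf with h2 | h2
            · exact h2
            · exact absurd (h.trans h2) hab.1
        have hbelow_b : ∀ x ∈ Cb, x ⊆ b := by
          intro x hx
          have hxD : x ∈ D := by rw [← hcovD]; exact Finset.mem_union_right _ hx
          have hxf := (Finset.mem_filter.1 hxD).2
          rcases hCb x hx b hbCb with h | h
          · exact h
          · rcases hxf with h2 | h2
            · exact absurd (h.trans h2) hab.2
            · exact h2
        have habove_a : ∀ x ∈ Ea, a ⊆ x := by
          intro x hx
          have hxU : x ∈ U := by rw [← hcovU]; exact Finset.mem_union_left _ hx
          have hxf := (Finset.mem_filter.1 hxU).2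
          rcases hEa x hx a haEa with h | h
          · rcases hxf with h2 | h2
            · exact h2
            · exact absurd (h2.trans h) hab.2
          · exact h
        have habove_b : ∀ x ∈ Eb, b ⊆ x := by
          intro x hx
          have hxU : x ∈ U := by rw [← hcovU]; exact Finset.mem_union_right _ hx
          have hxf := (Finset.mem_filter.1 hxU).2
          rcases hEb x hx b hbEb with h | h
          · rcases hxf with h2 | h2
            · exact absurd (h2.trans h) hab.1
            · exact h2
          · exact h
        refine ⟨Ca ∪ Ea, Cb ∪ Eb, ?_, chn_union a hCa hEa hbelow_a habove_a,
          chn_union b hCb hEb hbelow_b habove_b⟩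
        have hDU : D ∪ U = K := by
          apply Finset.Subset.antisymm
          · exact Finset.union_subset hDK hUK
          · intro z hz
            by_cases hza : z ⊆ a ∨ z ⊆ b
            · exact Finset.mem_union_left _ (Finset.mem_filter.2 ⟨hz, hza⟩)
            · by_cases hzb : a ⊆ z ∨ b ⊆ z
              · exact Finset.mem_union_right _ (Finset.mem_filter.2 ⟨hz, hzb⟩)
              · push_neg at hza hzb
                exact absurd (h3 z hz a ha b hb ⟨hza.1, hzb.1⟩ ⟨hza.2, hzb.2⟩ hab) (fun h => h)
        calc (Ca ∪ Ea) ∪ (Cb ∪ Eb) = (Ca ∪ Cb) ∪ (Ea ∪ Eb) := by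
              rw [Finset.union_assoc, Finset.union_assoc]
              congr 1
              rw [← Finset.union_assoc, ← Finset.union_assoc, Finset.union_comm Ea Cb]
          _ = D ∪ U := by rw [hcovD, hcovU]
          _ = K := hDU
      · push_neg at hcase
        have hKne : K.Nonempty := by
          rcases Finset.eq_empty_or_nonempty K with h | h
          · exfalso; apply hch; intro x hx; rw [h] at hx; simp at hx
          · exact h
        obtain ⟨m, hmK, hmin⟩ := K.exists_min_image (fun s => s.card) hKne
        have hKfne : (K.filter (fun x => m ⊆ x)).Nonempty :=
          ⟨m, Finset.mem_filter.2 ⟨hmK, Finset.Subset.rfl⟩⟩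
        obtain ⟨M, hMf, hMmax⟩ := (K.filter (fun x => m ⊆ x)).exists_max_image (fun s => s.card) hKfne
        have hMK : M ∈ K := (Finset.mem_filter.1 hMf).1
        have hmM : m ⊆ M := (Finset.mem_filter.1 hMf).2
        set K' := (K.erase m).erase M with hK'def
        have hK'sub : K' ⊆ K := (Finset.erase_subset _ _).trans (Finset.erase_subset _ _)
        have hchK' : Chn K' := by
          intro x hx y hy
          by_contra hcmp
          push_neg at hcmp
          have hxK : x ∈ K := hK'sub hx
          have hyK : y ∈ K := hK'sub hy
          have hxm : x ≠ m := Finset.ne_of_mem_erase (Finset.mem_of_mem_erase hx)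
          have hxM : x ≠ M := Finset.ne_of_mem_erase hx
          have hym : y ≠ m := Finset.ne_of_mem_erase (Finset.mem_of_mem_erase hy)
          have hyM : y ≠ M := Finset.ne_of_mem_erase hy
          have hc2 := hcase x hxK y hyK hcmp
          by_cases hDK : K.filter (fun z => z ⊆ x ∨ z ⊆ y) = K
          · have hMin : M ∈ K.filter (fun z => z ⊆ x ∨ z ⊆ y) := by rw [hDK]; exact hMK
            rcases (Finset.mem_filter.1 hMin).2 with h | h
            · have hxf : x ∈ K.filter (fun z => m ⊆ z) :=
                Finset.mem_filter.2 ⟨hxK, hmM.trans h⟩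
              exact hxM (Finset.eq_of_subset_of_card_le h (hMmax x hxf)).symm
            · have hyf : y ∈ K.filter (fun z => m ⊆ z) :=
                Finset.mem_filter.2 ⟨hyK, hmM.trans h⟩
              exact hyM (Finset.eq_of_subset_of_card_le h (hMmax y hyf)).symm
          · have hUK := hc2 hDK
            have hmin' : m ∈ K.filter (fun z => x ⊆ z ∨ y ⊆ z) := by rw [hUK]; exact hmK
            rcases (Finset.mem_filter.1 hmin').2 with h | h
            · exact hxm (Finset.eq_of_subset_of_card_le h (hmin x hxK))
            · exact hym (Finset.eq_of_subset_of_card_le h (hmin y hyK))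
        refine ⟨K', {m, M}, ?_, hchK', ?_⟩
        · apply Finset.Subset.antisymm
          · apply Finset.union_subset hK'sub
            intro z hz
            rcases Finset.mem_insert.1 hz with h | h
            · rw [h]; exact hmK
            · rw [Finset.mem_singleton.1 h]; exact hMK
          · intro z hz
            by_cases h1 : z = m
            · exact Finset.mem_union_right _ (by simp [h1])
            by_cases h2 : z = M
            · exact Finset.mem_union_right _ (by simp [h2])
            · exact Finset.mem_union_left _
                (Finset.mem_erase.2 ⟨h2, Finset.mem_erase.2 ⟨h1, hz⟩⟩)
        · intro x hx y hy
          rcases Finset.mem_insert.1 hx with h1 | h1 <;> rcases Finset.mem_insert.1 hy with h2 | h2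
          · left; rw [h1, h2]
          · left; rw [h1, Finset.mem_singleton.1 h2]; exact hmM
          · right; rw [h2, Finset.mem_singleton.1 h1]; exact hmM
          · left; rw [Finset.mem_singleton.1 h1, Finset.mem_singleton.1 h2]




variable {α : Type*} [DecidableEq α]

def IrrP (F : Finset (Finset α)) (S : Finset α) : Prop :=
  ∀ A ∈ F, ∀ B ∈ F, A ∪ B = S → A = S ∨ B = S

noncomputable def Irr (F : Finset (Finset α)) : Finset (Finset α) := F.filter (IrrP F)

lemma sup_mem_or (F : Finset (Finset α)) (hunion : ∀ A ∈ F, ∀ B ∈ F, A ∪ B ∈ F) :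
    ∀ J : Finset (Finset α), (∀ A ∈ J, A ∈ F) → J = ∅ ∨ J.sup id ∈ F := by
  intro J
  induction J using Finset.induction_on with
  | empty => intro _; left; rfl
  | @insert a s ha ih =>
      intro hmem
      right
      rw [Finset.sup_insert]
      rcases ih (fun A hA => hmem A (Finset.mem_insert_of_mem hA)) with h | h
      · subst h
        simpa using hmem a (Finset.mem_insert_self _ _)
      · exact hunion a (hmem a (Finset.mem_insert_self _ _)) _ h

lemma inf_mem_or [Fintype α] (F : Finset (Finset α))
    (hinter : ∀ A ∈ F, ∀ B ∈ F, A ∩ B ∈ F) :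
    ∀ J : Finset (Finset α), (∀ A ∈ J, A ∈ F) → J = ∅ ∨ J.inf id ∈ F := by
  intro J
  induction J using Finset.induction_on with
  | empty => intro _; left; rfl
  | @insert a s ha ih =>
      intro hmem
      right
      rw [Finset.inf_insert]
      rcases ih (fun A hA => hmem A (Finset.mem_insert_of_mem hA)) with h | h
      · subst h
        simpa using hmem a (Finset.mem_insert_self _ _)
      · exact hinter a (hmem a (Finset.mem_insert_self _ _)) _ h

lemma recon (F : Finset (Finset α)) :
    ∀ (N : ℕ) (S : Finset α), S ∈ F → S.card ≤ N →
      ((Irr F).filter (fun T => T ⊆ S)).sup id = S := by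
  intro N
  induction N with
  | zero =>
      intro S hS hc
      have hS0 : S = ∅ := Finset.card_eq_zero.1 (Nat.le_zero.1 hc)
      have hirr : IrrP F S := by
        intro A hA B hB hAB
        left
        rw [hS0] at hAB ⊢
        exact Finset.subset_empty.1 (hAB ▸ Finset.subset_union_left)
      refine le_antisymm (Finset.sup_le fun b hb => ?_) (Finset.le_sup (f := id) ?_)
      · exact (Finset.mem_filter.1 hb).2
      · exact Finset.mem_filter.2 ⟨Finset.mem_filter.2 ⟨hS, hirr⟩, Finset.Subset.rfl⟩
  | succ N ih =>
      intro S hS hc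
      by_cases hirr : IrrP F S
      · refine le_antisymm (Finset.sup_le fun b hb => ?_) (Finset.le_sup (f := id) ?_)
        · exact (Finset.mem_filter.1 hb).2
        · exact Finset.mem_filter.2 ⟨Finset.mem_filter.2 ⟨hS, hirr⟩, Finset.Subset.rfl⟩
      · simp only [IrrP, not_forall] at hirr
        obtain ⟨A, hA, B, hB, hAB, hne2⟩ := hirr
        push_neg at hne2
        obtain ⟨hA2, hB2⟩ := hne2
        have hAsub : A ⊂ S := Finset.ssubset_iff_subset_ne.2 ⟨hAB ▸ Finset.subset_union_left, hA2⟩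
        have hBsub : B ⊂ S := Finset.ssubset_iff_subset_ne.2 ⟨hAB ▸ Finset.subset_union_right, hB2⟩
        have hAcard : A.card ≤ N := by
          have := Finset.card_lt_card hAsub; omega
        have hBcard : B.card ≤ N := by
          have := Finset.card_lt_card hBsub; omega
        have hA3 := ih A hA hAcard
        have hB3 := ih B hB hBcard
        refine le_antisymm (Finset.sup_le fun b hb => (Finset.mem_filter.1 hb).2) ?_
        have hAup : A ⊆ ((Irr F).filter (fun T => T ⊆ S)).sup id := by
          have hsubf : ((Irr F).filter (fun T => T ⊆ A)) ⊆ ((Irr F).filter (fun T => T ⊆ S)) := by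
            intro T hT
            rw [Finset.mem_filter] at hT ⊢
            exact ⟨hT.1, hT.2.trans hAsub.subset⟩
          conv_lhs => rw [← hA3]
          exact Finset.le_iff_subset.1 (Finset.sup_mono hsubf)
        have hBup : B ⊆ ((Irr F).filter (fun T => T ⊆ S)).sup id := by
          have hsubf : ((Irr F).filter (fun T => T ⊆ B)) ⊆ ((Irr F).filter (fun T => T ⊆ S)) := by
            intro T hT
            rw [Finset.mem_filter] at hT ⊢
            exact ⟨hT.1, hT.2.trans hBsub.subset⟩
          conv_lhs => rw [← hB3]
          exact Finset.le_iff_subset.1 (Finset.sup_mono hsubf)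
        intro x hx
        rw [← hAB] at hx
        rcases Finset.mem_union.1 hx with h | h
        · exact hAup h
        · exact hBup h

lemma irr_subset (F : Finset (Finset α))
    (hinter : ∀ A ∈ F, ∀ B ∈ F, A ∩ B ∈ F)
    (hunion : ∀ A ∈ F, ∀ B ∈ F, A ∪ B ∈ F) :
    ∀ (J : Finset (Finset α)) (S : Finset α), S ∈ F → IrrP F S → S.Nonempty →
      (∀ A ∈ J, A ∈ F) → S ⊆ J.sup id → ∃ A ∈ J, S ⊆ A := by
  intro J
  induction J using Finset.induction_on with
  | empty =>
      intro S _ _ hne _ hsub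
      simp only [Finset.sup_empty] at hsub
      exact absurd (Finset.subset_empty.1 hsub) hne.ne_empty
  | @insert a J' ha ih =>
      intro S hS hirr hne hmem hsub
      rw [Finset.sup_insert] at hsub
      rcases sup_mem_or F hunion J' (fun A hA => hmem A (Finset.mem_insert_of_mem hA)) with h0 | hJmem
      · subst h0
        simp only [Finset.sup_empty] at hsub
        refine ⟨a, Finset.mem_insert_self _ _, ?_⟩
        simpa using hsub
      · have key : (S ∩ a) ∪ (S ∩ J'.sup id) = S := by
          rw [← Finset.inter_union_distrib_left]
          exact Finset.inter_eq_left.2 hsub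
        have h1 : S ∩ a ∈ F := hinter S hS a (hmem a (Finset.mem_insert_self _ _))
        have h2 : S ∩ J'.sup id ∈ F := hinter S hS _ hJmem
        rcases hirr _ h1 _ h2 key with hEq | hEq
        · exact ⟨a, Finset.mem_insert_self _ _, by rw [← hEq]; exact Finset.inter_subset_right⟩
        · have hsub2 : S ⊆ J'.sup id := by rw [← hEq]; exact Finset.inter_subset_right
          obtain ⟨A, hAJ, hSA⟩ := ih S hS hirr hne
            (fun A hA => hmem A (Finset.mem_insert_of_mem hA)) hsub2
          exact ⟨A, Finset.mem_insert_of_mem hAJ, hSA⟩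

lemma chain_of_irr (F : Finset (Finset α))
    (hinter : ∀ A ∈ F, ∀ B ∈ F, A ∩ B ∈ F)
    (hunion : ∀ A ∈ F, ∀ B ∈ F, A ∪ B ∈ F) :
    ∀ (N : ℕ) (J : Finset (Finset α)), J.card ≤ N → J.Nonempty →
      (∀ A ∈ J, A ∈ F ∧ IrrP F A ∧ A.Nonempty) →
      ∃ l : List (Finset α), l ≠ [] ∧ List.Chain' (fun A B => B ⊂ A) l ∧
        (∀ x ∈ l, x ∈ F) ∧ l.length = J.card ∧ l.head? = some (J.sup id) := by
  intro N
  induction N with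
  | zero =>
      intro J hJ hne _
      exact absurd (Finset.card_eq_zero.1 (Nat.le_zero.1 hJ)) hne.ne_empty
  | succ N ih =>
      intro J hJ hne hmem
      obtain ⟨E, hEJ, hEmax⟩ := J.exists_max_image (fun s => s.card) hne
      set J' := J.erase E with hJ'def
      rcases Finset.eq_empty_or_nonempty J' with hJ'e | hJ'ne
      · have hJE : J = {E} := by
          apply Finset.eq_singleton_iff_unique_mem.2
          refine ⟨hEJ, fun x hx => ?_⟩
          by_contra hxe
          have : x ∈ J' := Finset.mem_erase.2 ⟨hxe, hx⟩
          rw [hJ'e] at this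
          simp at this
        refine ⟨[E], by simp, List.isChain_singleton _, ?_, by rw [hJE]; simp, by rw [hJE]; simp⟩
        intro x hx
        simp only [List.mem_singleton] at hx
        rw [hx]
        exact (hmem E hEJ).1
      · have hcard' : J'.card ≤ N := by
          have h1 : J'.card = J.card - 1 := Finset.card_erase_of_mem hEJ
          have h2 : 1 ≤ J.card := Finset.card_pos.2 hne
          omega
        obtain ⟨l, hlne, hch, hmeml, hlen, hhead⟩ := ih J' hcard' hJ'ne
          (fun A hA => hmem A (Finset.mem_of_mem_erase hA))
        obtain ⟨hd, tl, rfl⟩ := List.exists_cons_of_ne_nil hlne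
        have hhd : hd = J'.sup id := by
          simp only [List.head?_cons, Option.some.injEq] at hhead
          exact hhead
        have hJsup : J.sup id ∈ F := by
          rcases sup_mem_or F hunion J (fun A hA => (hmem A hA).1) with h | h
          · exact absurd h hne.ne_empty
          · exact h
        have hins : J = insert E J' := by
          rw [hJ'def, Finset.insert_erase hEJ]
        have hssub : J'.sup id ⊂ J.sup id := by
          refine Finset.ssubset_iff_subset_ne.2 ⟨Finset.sup_mono (Finset.erase_subset _ _), ?_⟩
          intro hEqq
          have hEsub : E ⊆ J'.sup id := by
            rw [hEqq]
            exact Finset.le_sup (f := id) hEJ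
          obtain ⟨A, hAJ', hEA⟩ := irr_subset F hinter hunion J' E (hmem E hEJ).1
            (hmem E hEJ).2.1 (hmem E hEJ).2.2 (fun A hA => (hmem A (Finset.mem_of_mem_erase hA)).1)
            hEsub
          have hAcard : A.card ≤ E.card := hEmax A (Finset.mem_of_mem_erase hAJ')
          have : E = A := Finset.eq_of_subset_of_card_le hEA hAcard
          exact (Finset.ne_of_mem_erase hAJ') this.symm
        refine ⟨J.sup id :: hd :: tl, by simp, ?_, ?_, ?_, by simp⟩
        · refine List.isChain_cons_cons.2 ?_
          exact ⟨by rw [hhd]; exact hssub, hch⟩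
        · intro x hx
          rcases List.mem_cons.1 hx with h | h
          · rw [h]; exact hJsup
          · exact hmeml x h
        · simp only [List.length_cons] at hlen ⊢
          have h1 : J'.card = J.card - 1 := Finset.card_erase_of_mem hEJ
          have h2 : 1 ≤ J.card := Finset.card_pos.2 hne
          omega

lemma chain_budget [Fintype α] (F : Finset (Finset α)) (g : ℕ)
    (hbot : ∀ A ∈ F, g ≤ A.card)
    (hgap : ∀ A ∈ F, ∀ B ∈ F, A ⊂ B → g ≤ (B \ A).card) :
    ∀ l : List (Finset α), List.Chain' (fun A B => B ⊂ A) l → (∀ x ∈ l, x ∈ F) →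
      ∀ hd tl, l = hd :: tl → l.length * g ≤ hd.card := by
  intro l
  induction l with
  | nil => intro _ _ hd tl h; simp at h
  | cons a tl ih =>
      intro hch hmem hd tl' heq
      have ha : a = hd := by cases heq; rfl
      subst ha
      cases tl with
      | nil =>
          simpa using hbot a (hmem a (by simp))
      | cons b tl2 =>
          have hch2 := List.isChain_cons_cons.1 hch
          have ihb := ih hch2.2 (fun x hx => hmem x (List.mem_cons_of_mem _ hx)) b tl2 rfl
          have hba : b ⊂ a := hch2.1
          have hgab := hgap b (hmem b (by simp)) a (hmem a (by simp)) hba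
          have hcard := Finset.card_sdiff_add_card_eq_card hba.subset
          simp only [List.length_cons] at ihb ⊢
          have hexp : (tl2.length + 1 + 1) * g = (tl2.length + 1) * g + g := by ring
          omega

lemma prefix_eq {C : Finset (Finset α)} (hC : ∀ x ∈ C, ∀ y ∈ C, x ⊆ y ∨ y ⊆ x)
    {S S' : Finset α}
    (h : (C.filter (fun T => T ⊆ S)).card = (C.filter (fun T => T ⊆ S')).card) :
    C.filter (fun T => T ⊆ S) = C.filter (fun T => T ⊆ S') := by
  have hcmp : C.filter (fun T => T ⊆ S) ⊆ C.filter (fun T => T ⊆ S') ∨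
      C.filter (fun T => T ⊆ S') ⊆ C.filter (fun T => T ⊆ S) := by
    by_contra hcon
    push_neg at hcon
    obtain ⟨h1, h2⟩ := hcon
    obtain ⟨x, hx1, hx2⟩ := Finset.not_subset.1 h1
    obtain ⟨y, hy1, hy2⟩ := Finset.not_subset.1 h2
    have hxC := (Finset.mem_filter.1 hx1).1
    have hyC := (Finset.mem_filter.1 hy1).1
    have hxS : x ⊆ S := (Finset.mem_filter.1 hx1).2
    have hyS' : y ⊆ S' := (Finset.mem_filter.1 hy1).2
    rcases hC x hxC y hyC with hh | hh
    · exact hx2 (Finset.mem_filter.2 ⟨hxC, hh.trans hyS'⟩)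
    · exact hy2 (Finset.mem_filter.2 ⟨hyC, hh.trans hxS⟩)
  rcases hcmp with hh | hh
  · exact Finset.eq_of_subset_of_card_le hh (le_of_eq h.symm)
  · exact (Finset.eq_of_subset_of_card_le hh (le_of_eq h)).symm

lemma two_mul_le_sq_add (a b : ℕ) : 2 * (a * b) ≤ a ^ 2 + b ^ 2 := by
  rcases le_total a b with h | h
  · obtain ⟨c, rfl⟩ := Nat.exists_eq_add_of_le h
    nlinarith
  · obtain ⟨c, rfl⟩ := Nat.exists_eq_add_of_le h
    nlinarith



lemma family_count {α : Type*} [DecidableEq α] [Fintype α] (F : Finset (Finset α)) (g : ℕ)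
    (hg : 0 < g) (hne : F.Nonempty)
    (hinter : ∀ A ∈ F, ∀ B ∈ F, A ∩ B ∈ F)
    (hunion : ∀ A ∈ F, ∀ B ∈ F, A ∪ B ∈ F)
    (hgap : ∀ A ∈ F, ∀ B ∈ F, A ⊂ B → g ≤ (B \ A).card)
    (hbot : ∀ A ∈ F, g ≤ A.card)
    (htop : ∀ A ∈ F, g ≤ (Finset.univ \ A).card)
    (h3 : ∀ A ∈ F, ∀ B ∈ F, ∀ C ∈ F,
      (¬ A ⊆ B ∧ ¬ B ⊆ A) → (¬ A ⊆ C ∧ ¬ C ⊆ A) → (¬ B ⊆ C ∧ ¬ C ⊆ B) →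
      (A \ (B ∪ C)).Nonempty → (B \ (A ∪ C)).Nonempty → (C \ (A ∪ B)).Nonempty → False) :
    ∃ K : ℕ, F.card * 4 ≤ K ^ 2 ∧ K * g ≤ Fintype.card α := by
  classical
  -- the bottom element
  have hB0mem : F.inf id ∈ F := by
    rcases inf_mem_or F hinter F (fun A hA => hA) with h | h
    · exact absurd h hne.ne_empty
    · exact h
  set B₀ := F.inf id with hB0def
  have hB0le : ∀ A ∈ F, B₀ ⊆ A := fun A hA => Finset.le_iff_subset.1 (Finset.inf_le hA)
  have hB0irr : IrrP F B₀ := by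
    intro A hA B hB hAB
    left
    apply Finset.Subset.antisymm
    · exact hAB ▸ Finset.subset_union_left
    · exact hB0le A hA
  have hB0Irr : B₀ ∈ Irr F := Finset.mem_filter.2 ⟨hB0mem, hB0irr⟩
  have hIrrne : (Irr F).Nonempty := ⟨B₀, hB0Irr⟩
  have hIrrF : ∀ A ∈ Irr F, A ∈ F := fun A hA => (Finset.mem_filter.1 hA).1
  -- elements are nonempty
  have hFne : ∀ A ∈ F, A.Nonempty := by
    intro A hA
    rw [← Finset.card_pos]
    exact lt_of_lt_of_le hg (hbot A hA)
  -- no 3-antichain among irreducibles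
  have h3irr : ∀ a ∈ Irr F, ∀ b ∈ Irr F, ∀ c ∈ Irr F,
      (¬ a ⊆ b ∧ ¬ b ⊆ a) → (¬ a ⊆ c ∧ ¬ c ⊆ a) → (¬ b ⊆ c ∧ ¬ c ⊆ b) → False := by
    intro a ha b hb c hc hab hac hbc
    have haF := hIrrF a ha
    have hbF := hIrrF b hb
    have hcF := hIrrF c hc
    have hpriv : ∀ x ∈ Irr F, ∀ y ∈ F, ∀ z ∈ F, ¬ x ⊆ y → ¬ x ⊆ z →
        (x \ (y ∪ z)).Nonempty := by
      intro x hx y hy z hz hxy hxz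
      by_contra hcon
      have hxsub : x ⊆ y ∪ z :=
        Finset.sdiff_eq_empty_iff_subset.1 (Finset.not_nonempty_iff_eq_empty.1 hcon)
      have key : (x ∩ y) ∪ (x ∩ z) = x := by
        rw [← Finset.inter_union_distrib_left]
        exact Finset.inter_eq_left.2 hxsub
      have hxF := hIrrF x hx
      have h1 : x ∩ y ∈ F := hinter x hxF y hy
      have h2 : x ∩ z ∈ F := hinter x hxF z hz
      rcases (Finset.mem_filter.1 hx).2 _ h1 _ h2 key with hEq | hEq
      · exact hxy (by rw [← hEq]; exact Finset.inter_subset_right)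
      · exact hxz (by rw [← hEq]; exact Finset.inter_subset_right)
    exact h3 a haF b hbF c hcF hab hac hbc
      (hpriv a ha b hbF c hcF hab.1 hac.1)
      (hpriv b hb a haF c hcF hab.2 hbc.1)
      (hpriv c hc a haF b hbF hac.2 hbc.2)
  -- two chains covering the irreducibles
  obtain ⟨C₁, C₂, hcov, hc1, hc2⟩ := dilworth2 (Irr F).card (Irr F) le_rfl h3irr
  -- normalize: disjoint chains with B₀ in the first one
  obtain ⟨D₁, D₂, hD1chn, hD2chn, hdisj, hcov', hB0D1⟩ :
      ∃ D₁ D₂ : Finset (Finset α), Chn D₁ ∧ Chn D₂ ∧ Disjoint D₁ D₂ ∧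
        D₁ ∪ D₂ = Irr F ∧ B₀ ∈ D₁ := by
    have hB0u : B₀ ∈ C₁ ∪ C₂ := by rw [hcov]; exact hB0Irr
    rcases Finset.mem_union.1 hB0u with h | h
    · exact ⟨C₁, C₂ \ C₁, hc1, chn_subset hc2 (Finset.sdiff_subset),
        Finset.disjoint_sdiff, by rw [Finset.union_sdiff_self_eq_union]; exact hcov, h⟩
    · exact ⟨C₂, C₁ \ C₂, hc2, chn_subset hc1 (Finset.sdiff_subset),
        Finset.disjoint_sdiff, by rw [Finset.union_sdiff_self_eq_union, Finset.union_comm]; exact hcov, h⟩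
  set p := D₁.card with hpdef
  set q := D₂.card with hqdef
  set m := (Irr F).card with hmdef
  have hpq : p + q = m := by
    rw [hpdef, hqdef, hmdef, ← hcov']
    exact (Finset.card_union_of_disjoint hdisj).symm
  -- counting injection
  have hcount : F.card ≤ p * (q + 1) := by
    have hmaps : ∀ S ∈ F, (((D₁.filter (fun T => T ⊆ S)).card, (D₂.filter (fun T => T ⊆ S)).card) ∈
        (Finset.Ico 1 (p + 1)) ×ˢ (Finset.range (q + 1))) := by
      intro S hS
      rw [Finset.mem_product]
      constructor
      · rw [Finset.mem_Ico]
        constructor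
        · rw [Nat.one_le_iff_ne_zero, ← Nat.pos_iff_ne_zero, Finset.card_pos]
          exact ⟨B₀, Finset.mem_filter.2 ⟨hB0D1, hB0le S hS⟩⟩
        · have := Finset.card_filter_le D₁ (fun T => T ⊆ S)
          omega
      · rw [Finset.mem_range]
        have := Finset.card_filter_le D₂ (fun T => T ⊆ S)
        omega
    have hinj : ∀ S ∈ F, ∀ S' ∈ F,
        (((D₁.filter (fun T => T ⊆ S)).card, (D₂.filter (fun T => T ⊆ S)).card) =
         ((D₁.filter (fun T => T ⊆ S')).card, (D₂.filter (fun T => T ⊆ S')).card)) → S = S' := by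
      intro S hS S' hS' heq
      have h1 : D₁.filter (fun T => T ⊆ S) = D₁.filter (fun T => T ⊆ S') :=
        prefix_eq hD1chn (congrArg Prod.fst heq)
      have h2 : D₂.filter (fun T => T ⊆ S) = D₂.filter (fun T => T ⊆ S') :=
        prefix_eq hD2chn (congrArg Prod.snd heq)
      have hIeq : (Irr F).filter (fun T => T ⊆ S) = (Irr F).filter (fun T => T ⊆ S') := by
        rw [← hcov', Finset.filter_union, Finset.filter_union, h1, h2]
      have e1 := recon F S.card S hS le_rfl
      have e2 := recon F S'.card S' hS' le_rfl
      rw [← e1, ← e2, hIeq]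
    calc F.card ≤ ((Finset.Ico 1 (p + 1)) ×ˢ (Finset.range (q + 1))).card := by
          apply Finset.card_le_card_of_injOn
            (fun S => ((D₁.filter (fun T => T ⊆ S)).card, (D₂.filter (fun T => T ⊆ S)).card))
          · intro S hS
            exact hmaps S hS
          · intro S hS S' hS' heq
            exact hinj S hS S' hS' heq
      _ = p * (q + 1) := by
          rw [Finset.card_product, Nat.card_Ico, Finset.card_range, Nat.add_sub_cancel]
  -- a long chain
  obtain ⟨l, hlne, hch, hmeml, hlen, hhead⟩ := chain_of_irr F hinter hunion (Irr F).card (Irr F)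
    le_rfl hIrrne (fun A hA => ⟨hIrrF A hA, (Finset.mem_filter.1 hA).2, hFne A (hIrrF A hA)⟩)
  obtain ⟨hd, tl, rfl⟩ := List.exists_cons_of_ne_nil hlne
  have hbudget : (hd :: tl).length * g ≤ hd.card :=
    chain_budget F g hbot hgap (hd :: tl) hch hmeml hd tl rfl
  have hhdF : hd ∈ F := hmeml hd (by simp)
  have htophd : g ≤ (Finset.univ \ hd).card := htop hd hhdF
  have hcompl : hd.card + (Finset.univ \ hd).card = Fintype.card α := by
    rw [← Finset.card_univ]
    have := Finset.card_sdiff_add_card_eq_card (Finset.subset_univ hd)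
    omega
  have hbudget2 : (m + 1) * g ≤ Fintype.card α := by
    have hlenm : (hd :: tl).length = m := hlen
    have hstep : (m + 1) * g = m * g + g := by ring
    rw [← hlenm] at hstep ⊢
    omega
  refine ⟨m + 1, ?_, hbudget2⟩
  -- F.card * 4 ≤ (m+1)^2
  have h4 : 4 * (p * (q + 1)) ≤ (p + (q + 1)) ^ 2 := by
    have := two_mul_le_sq_add p (q + 1)
    nlinarith
  have : p + (q + 1) = m + 1 := by omega
  rw [this] at h4
  omega

end TwoCut


namespace TwoCutG



variable {n : ℕ} (G : SimpleGraph (Fin n))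

noncomputable def nnG (A B : Finset (Fin n)) : ℕ :=
  ∑ x : Fin n, ∑ y : Fin n, if G.Adj x y ∧ x ∈ A ∧ y ∈ B then 1 else 0

noncomputable def cutG (S : Finset (Fin n)) : ℕ := nnG G S Sᶜ

lemma nnG_comm (A B : Finset (Fin n)) : nnG G A B = nnG G B A := by
  unfold nnG
  rw [Finset.sum_comm]
  refine Finset.sum_congr rfl fun x _ => Finset.sum_congr rfl fun y _ => ?_
  refine if_congr ?_ rfl rfl
  constructor
  · rintro ⟨h1, h2, h3⟩; exact ⟨h1.symm, h3, h2⟩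
  · rintro ⟨h1, h2, h3⟩; exact ⟨h1.symm, h3, h2⟩

lemma nnG_mono {A B A' B' : Finset (Fin n)} (hA : A ⊆ A') (hB : B ⊆ B') :
    nnG G A B ≤ nnG G A' B' := by
  unfold nnG
  refine Finset.sum_le_sum fun x _ => Finset.sum_le_sum fun y _ => ?_
  split_ifs with h1 h2
  · rfl
  · exact absurd ⟨h1.1, hA h1.2.1, hB h1.2.2⟩ h2
  · exact Nat.zero_le _
  · rfl

lemma nnG_add_right (A B C : Finset (Fin n)) (h : Disjoint B C) :
    nnG G A (B ∪ C) = nnG G A B + nnG G A C := by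
  unfold nnG
  rw [← Finset.sum_add_distrib]
  refine Finset.sum_congr rfl fun x _ => ?_
  rw [← Finset.sum_add_distrib]
  refine Finset.sum_congr rfl fun y _ => ?_
  by_cases hB : y ∈ B
  · have hC : y ∉ C := Finset.disjoint_left.1 h hB
    simp [Finset.mem_union, hB, hC]
  · by_cases hC : y ∈ C <;> simp [Finset.mem_union, hB, hC]

lemma nnG_add_left (A B C : Finset (Fin n)) (h : Disjoint A B) :
    nnG G (A ∪ B) C = nnG G A C + nnG G B C := by
  rw [nnG_comm, nnG_add_right G C A B h, nnG_comm, nnG_comm G C B]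

lemma nnG_le_add_right (A B C : Finset (Fin n)) :
    nnG G A (B ∪ C) ≤ nnG G A B + nnG G A C := by
  unfold nnG
  rw [← Finset.sum_add_distrib]
  refine Finset.sum_le_sum fun x _ => ?_
  rw [← Finset.sum_add_distrib]
  refine Finset.sum_le_sum fun y _ => ?_
  by_cases hB : y ∈ B <;> by_cases hC : y ∈ C <;> simp [Finset.mem_union, hB, hC]

lemma degree_sum_eq (x : Fin n) :
    (∑ y : Fin n, if G.Adj x y then 1 else 0) = G.degree x := by
  rw [← SimpleGraph.card_neighborFinset_eq_degree, SimpleGraph.neighborFinset_eq_filter,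
    Finset.card_filter]

lemma deg_split (S : Finset (Fin n)) :
    nnG G S S + cutG G S = ∑ x ∈ S, G.degree x := by
  unfold cutG nnG
  rw [← Finset.sum_add_distrib]
  have hpt : ∀ x : Fin n,
      ((∑ y : Fin n, if G.Adj x y ∧ x ∈ S ∧ y ∈ S then 1 else 0) +
       (∑ y : Fin n, if G.Adj x y ∧ x ∈ S ∧ y ∈ Sᶜ then 1 else 0)) =
      if x ∈ S then G.degree x else 0 := by
    intro x
    by_cases hx : x ∈ S
    · rw [← Finset.sum_add_distrib]
      rw [if_pos hx, ← degree_sum_eq G x]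
      refine Finset.sum_congr rfl fun y _ => ?_
      by_cases hy : y ∈ S <;> simp [hx, hy]
    · simp [hx]
  rw [Finset.sum_congr rfl (fun x _ => hpt x)]
  simp [Finset.sum_ite_mem]

lemma deg_split_reg {r : ℕ} (hreg : G.IsRegularOfDegree (2 * r)) (S : Finset (Fin n)) :
    nnG G S S + cutG G S = 2 * r * S.card := by
  rw [deg_split]
  rw [Finset.sum_congr rfl (fun x _ => hreg x)]
  rw [Finset.sum_const, smul_eq_mul, mul_comm]

lemma nnG_self_even (S : Finset (Fin n)) : Even (nnG G S S) := by
  have hsplit : nnG G S S =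
      (∑ x : Fin n, ∑ y : Fin n, if (G.Adj x y ∧ x ∈ S ∧ y ∈ S) ∧ x < y then 1 else 0) +
      (∑ x : Fin n, ∑ y : Fin n, if (G.Adj x y ∧ x ∈ S ∧ y ∈ S) ∧ y < x then 1 else 0) := by
    unfold nnG
    rw [← Finset.sum_add_distrib]
    refine Finset.sum_congr rfl fun x _ => ?_
    rw [← Finset.sum_add_distrib]
    refine Finset.sum_congr rfl fun y _ => ?_
    by_cases hc : G.Adj x y ∧ x ∈ S ∧ y ∈ S
    · have hne : x ≠ y := hc.1.ne
      rcases lt_or_gt_of_ne hne with h | h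
      · simp [hc, h, not_lt_of_gt h]
      · simp [hc, h, not_lt_of_gt h]
    · simp [hc]
  have hsym : (∑ x : Fin n, ∑ y : Fin n, if (G.Adj x y ∧ x ∈ S ∧ y ∈ S) ∧ x < y then 1 else 0) =
      (∑ x : Fin n, ∑ y : Fin n, if (G.Adj x y ∧ x ∈ S ∧ y ∈ S) ∧ y < x then 1 else 0) := by
    rw [Finset.sum_comm]
    refine Finset.sum_congr rfl fun x _ => Finset.sum_congr rfl fun y _ => ?_
    refine if_congr ?_ rfl rfl
    constructor
    · rintro ⟨⟨h1, h2, h3⟩, h4⟩; exact ⟨⟨h1.symm, h3, h2⟩, h4⟩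
    · rintro ⟨⟨h1, h2, h3⟩, h4⟩; exact ⟨⟨h1.symm, h3, h2⟩, h4⟩
  exact ⟨_, by rw [hsplit, hsym]⟩

lemma cut_even {r : ℕ} (hreg : G.IsRegularOfDegree (2 * r)) (S : Finset (Fin n)) :
    Even (cutG G S) := by
  have h1 := deg_split_reg G hreg S
  obtain ⟨a, ha⟩ := nnG_self_even G S
  have hm : 2 * r * S.card = 2 * (r * S.card) := by ring
  exact ⟨r * S.card - a, by omega⟩

lemma nnG_self_le (S : Finset (Fin n)) : nnG G S S ≤ S.card * (S.card - 1) := by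
  unfold nnG
  have hbound : ∀ x : Fin n,
      (∑ y : Fin n, if G.Adj x y ∧ x ∈ S ∧ y ∈ S then 1 else 0) ≤
      if x ∈ S then S.card - 1 else 0 := by
    intro x
    by_cases hx : x ∈ S
    · rw [if_pos hx, ← Finset.card_filter]
      have hsub : Finset.univ.filter (fun y => G.Adj x y ∧ x ∈ S ∧ y ∈ S) ⊆ S.erase x := by
        intro y hy
        rw [Finset.mem_filter] at hy
        exact Finset.mem_erase.2 ⟨fun h => hy.2.1.ne h.symm, hy.2.2.2⟩
      calc (Finset.univ.filter (fun y => G.Adj x y ∧ x ∈ S ∧ y ∈ S)).card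
          ≤ (S.erase x).card := Finset.card_le_card hsub
        _ = S.card - 1 := Finset.card_erase_of_mem hx
    · rw [if_neg hx]
      apply Nat.le_zero.2
      apply Finset.sum_eq_zero
      intro y _
      simp [hx]
  calc (∑ x : Fin n, ∑ y : Fin n, if G.Adj x y ∧ x ∈ S ∧ y ∈ S then 1 else 0)
      ≤ ∑ x : Fin n, if x ∈ S then S.card - 1 else 0 := Finset.sum_le_sum fun x _ => hbound x
    _ = S.card * (S.card - 1) := by
        rw [Finset.sum_ite_mem, Finset.univ_inter, Finset.sum_const, smul_eq_mul]

lemma size_bound {r : ℕ} (hr : 3 ≤ r) (hreg : G.IsRegularOfDegree (2 * r))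
    (S : Finset (Fin n)) (hne : S.Nonempty) (hc : cutG G S ≤ 4) : 2 * r + 1 ≤ S.card := by
  have h1 := deg_split_reg G hreg S
  have h2 := nnG_self_le G S
  have h3 : 1 ≤ S.card := Finset.card_pos.2 hne
  by_contra hcon
  push_neg at hcon
  set k := S.card with hk
  have hk2 : k ≤ 2 * r := by omega
  obtain ⟨j, hj⟩ : ∃ j, k = j + 1 := ⟨k - 1, by omega⟩
  rw [hj] at h1 h2 hk2
  have h4 : (j + 1) * (j + 1 - 1) = j * j + j := by
    simp [Nat.add_sub_cancel]
    ring
  rw [h4] at h2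
  have h5 : j ≤ 2 * r - 1 := by omega
  have h6 : j * j ≤ j * (2 * r - 1) := Nat.mul_le_mul_left j h5
  have h7 : 2 * r * (j + 1) = 2 * r * j + 2 * r := by ring
  have h8 : j * (2 * r - 1) + j = j * (2 * r) := by
    have : 1 ≤ 2 * r := by omega
    calc j * (2 * r - 1) + j = j * (2 * r - 1 + 1) := by ring
      _ = j * (2 * r) := by rw [Nat.sub_add_cancel this]
  have h9 : j * (2 * r) = 2 * r * j := by ring
  omega

lemma reach_mem (S : Finset (Fin n)) (h0 : cutG G S = 0) :
    ∀ {x y : Fin n}, G.Reachable x y → x ∈ S → y ∈ S := by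
  have hno : ∀ a b : Fin n, G.Adj a b → a ∈ S → b ∈ S := by
    intro a b hab haS
    by_contra hbS
    have hpos : (0:ℕ) < cutG G S := by
      unfold cutG nnG
      have hterm : (1:ℕ) ≤ ∑ y : Fin n, if G.Adj a y ∧ a ∈ S ∧ y ∈ Sᶜ then 1 else 0 := by
        have h1 : (if G.Adj a b ∧ a ∈ S ∧ b ∈ Sᶜ then (1:ℕ) else 0) = 1 := by
          simp [hab, haS, Finset.mem_compl, hbS]
        calc (1:ℕ) = if G.Adj a b ∧ a ∈ S ∧ b ∈ Sᶜ then 1 else 0 := h1.symm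
          _ ≤ _ := Finset.single_le_sum
            (f := fun y => if G.Adj a y ∧ a ∈ S ∧ y ∈ Sᶜ then (1:ℕ) else 0)
            (fun i _ => Nat.zero_le _) (Finset.mem_univ b)
      calc (0:ℕ) < 1 := one_pos
        _ ≤ _ := hterm.trans (Finset.single_le_sum (f := fun x =>
            ∑ y : Fin n, if G.Adj x y ∧ x ∈ S ∧ y ∈ Sᶜ then 1 else 0)
            (fun i _ => Nat.zero_le _) (Finset.mem_univ a))
    omega
  have key : ∀ (a b : Fin n) (_ : G.Walk a b), a ∈ S → b ∈ S := by
    intro a b w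
    induction w with
    | nil => exact fun h => h
    | cons h p ih => exact fun ha => ih (hno _ _ h ha)
  intro x y hxy hx
  obtain ⟨w⟩ := hxy
  exact key x y w hx

lemma cut_pos (S : Finset (Fin n)) {x y : Fin n} (hx : x ∈ S) (hy : y ∉ S)
    (hr : G.Reachable x y) : 1 ≤ cutG G S := by
  by_contra h
  push_neg at h
  have h0 : cutG G S = 0 := by omega
  exact hy (reach_mem G S h0 hr hx)

lemma submod (A B : Finset (Fin n)) :
    cutG G A + cutG G B =
      cutG G (A ∩ B) + cutG G (A ∪ B) + nnG G (A \ B) (B \ A) + nnG G (B \ A) (A \ B) := by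
  unfold cutG nnG
  simp only [← Finset.sum_add_distrib]
  refine Finset.sum_congr rfl fun x _ => Finset.sum_congr rfl fun y _ => ?_
  by_cases h : G.Adj x y
  · by_cases hxa : x ∈ A <;> by_cases hxb : x ∈ B <;> by_cases hya : y ∈ A <;> by_cases hyb : y ∈ B <;>
      simp [h, hxa, hxb, hya, hyb, Finset.mem_inter, Finset.mem_union, Finset.mem_sdiff,
        Finset.mem_compl]
  · simp [h]

lemma cutG_compl (S : Finset (Fin n)) : cutG G Sᶜ = cutG G S := by
  unfold cutG
  rw [compl_compl, nnG_comm]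

lemma cut_sdiff_le (A B : Finset (Fin n)) : cutG G (B \ A) ≤ cutG G A + cutG G B := by
  have h1 : (B \ A)ᶜ = A ∪ Bᶜ := by
    ext z
    simp [Finset.mem_compl, Finset.mem_sdiff, Finset.mem_union]
    tauto
  calc cutG G (B \ A) = nnG G (B \ A) (A ∪ Bᶜ) := by rw [cutG, h1]
    _ ≤ nnG G (B \ A) A + nnG G (B \ A) Bᶜ := nnG_le_add_right G _ _ _
    _ ≤ nnG G Aᶜ A + nnG G B Bᶜ := by
        apply Nat.add_le_add
        · refine nnG_mono G ?_ (Finset.Subset.refl _)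
          intro z hz
          rw [Finset.mem_sdiff] at hz
          rw [Finset.mem_compl]
          exact hz.2
        · refine nnG_mono G ?_ (Finset.Subset.refl _)
          intro z hz
          exact (Finset.mem_sdiff.1 hz).1
    _ = cutG G A + cutG G B := by
        have e1 : nnG G Aᶜ A = cutG G A := by
          rw [← cutG_compl G A]
          unfold cutG
          rw [compl_compl]
        have e2 : nnG G B Bᶜ = cutG G B := rfl
        rw [e1, e2]


lemma antichain3 {n r : ℕ} (G : SimpleGraph (Fin n)) (hreg : G.IsRegularOfDegree (2 * r))
    {u v : Fin n} (hreach : G.Reachable u v)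
    (S₁ S₂ S₃ : Finset (Fin n))
    (hu1 : u ∈ S₁) (hv1 : v ∉ S₁) (hr1 : ∀ x ∈ S₁, G.Reachable u x) (hc1 : cutG G S₁ = 2)
    (hu2 : u ∈ S₂) (hv2 : v ∉ S₂) (hr2 : ∀ x ∈ S₂, G.Reachable u x) (hc2 : cutG G S₂ = 2)
    (hu3 : u ∈ S₃) (hv3 : v ∉ S₃) (hr3 : ∀ x ∈ S₃, G.Reachable u x) (hc3 : cutG G S₃ = 2)
    (z12 : nnG G (S₁ \ S₂) (S₂ \ S₁) = 0) (z21 : nnG G (S₂ \ S₁) (S₁ \ S₂) = 0)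
    (z13 : nnG G (S₁ \ S₃) (S₃ \ S₁) = 0) (z31 : nnG G (S₃ \ S₁) (S₁ \ S₃) = 0)
    (z23 : nnG G (S₂ \ S₃) (S₃ \ S₂) = 0) (z32 : nnG G (S₃ \ S₂) (S₂ \ S₃) = 0)
    (hQ1 : (S₁ \ (S₂ ∪ S₃)).Nonempty) (hQ2 : (S₂ \ (S₁ ∪ S₃)).Nonempty)
    (hQ3 : (S₃ \ (S₁ ∪ S₂)).Nonempty) : False := by
  set T := (S₁ ∩ S₂) ∩ S₃ with hdefT
  set X12 := (S₁ ∩ S₂) \ S₃ with hdefX12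
  set X13 := (S₁ ∩ S₃) \ S₂ with hdefX13
  set X23 := (S₂ ∩ S₃) \ S₁ with hdefX23
  set P1 := S₁ \ (S₂ ∪ S₃) with hdefP1
  set P2 := S₂ \ (S₁ ∪ S₃) with hdefP2
  set P3 := S₃ \ (S₁ ∪ S₂) with hdefP3
  set D := ((S₁ ∪ S₂) ∪ S₃)ᶜ with hdefD
  have hmT : ∀ z : Fin n, z ∈ T ↔ (z ∈ S₁ ∧ z ∈ S₂ ∧ z ∈ S₃) := by
    intro z
    rw [hdefT]
    simp only [Finset.mem_inter, Finset.mem_sdiff, Finset.mem_union, Finset.mem_compl]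
    try tauto
  have hmX12 : ∀ z : Fin n, z ∈ X12 ↔ ((z ∈ S₁ ∧ z ∈ S₂) ∧ z ∉ S₃) := by
    intro z
    rw [hdefX12]
    simp only [Finset.mem_inter, Finset.mem_sdiff, Finset.mem_union, Finset.mem_compl]
    try tauto
  have hmX13 : ∀ z : Fin n, z ∈ X13 ↔ ((z ∈ S₁ ∧ z ∈ S₃) ∧ z ∉ S₂) := by
    intro z
    rw [hdefX13]
    simp only [Finset.mem_inter, Finset.mem_sdiff, Finset.mem_union, Finset.mem_compl]
    try tauto
  have hmX23 : ∀ z : Fin n, z ∈ X23 ↔ ((z ∈ S₂ ∧ z ∈ S₃) ∧ z ∉ S₁) := by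
    intro z
    rw [hdefX23]
    simp only [Finset.mem_inter, Finset.mem_sdiff, Finset.mem_union, Finset.mem_compl]
    try tauto
  have hmP1 : ∀ z : Fin n, z ∈ P1 ↔ (z ∈ S₁ ∧ z ∉ S₂ ∧ z ∉ S₃) := by
    intro z
    rw [hdefP1]
    simp only [Finset.mem_inter, Finset.mem_sdiff, Finset.mem_union, Finset.mem_compl]
    try tauto
  have hmP2 : ∀ z : Fin n, z ∈ P2 ↔ (z ∈ S₂ ∧ z ∉ S₁ ∧ z ∉ S₃) := by
    intro z
    rw [hdefP2]
    simp only [Finset.mem_inter, Finset.mem_sdiff, Finset.mem_union, Finset.mem_compl]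
    try tauto
  have hmP3 : ∀ z : Fin n, z ∈ P3 ↔ (z ∈ S₃ ∧ z ∉ S₁ ∧ z ∉ S₂) := by
    intro z
    rw [hdefP3]
    simp only [Finset.mem_inter, Finset.mem_sdiff, Finset.mem_union, Finset.mem_compl]
    try tauto
  have hmD : ∀ z : Fin n, z ∈ D ↔ (z ∉ S₁ ∧ z ∉ S₂ ∧ z ∉ S₃) := by
    intro z
    rw [hdefD]
    simp only [Finset.mem_inter, Finset.mem_sdiff, Finset.mem_union, Finset.mem_compl]
    try tauto
  have dis_T_X12 : Disjoint T X12 := by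
    rw [Finset.disjoint_left]
    intro z hz1 hz2
    rw [hmT z] at hz1
    rw [hmX12 z] at hz2
    tauto
  have dis_T_X13 : Disjoint T X13 := by
    rw [Finset.disjoint_left]
    intro z hz1 hz2
    rw [hmT z] at hz1
    rw [hmX13 z] at hz2
    tauto
  have dis_T_X23 : Disjoint T X23 := by
    rw [Finset.disjoint_left]
    intro z hz1 hz2
    rw [hmT z] at hz1
    rw [hmX23 z] at hz2
    tauto
  have dis_T_P1 : Disjoint T P1 := by
    rw [Finset.disjoint_left]
    intro z hz1 hz2
    rw [hmT z] at hz1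
    rw [hmP1 z] at hz2
    tauto
  have dis_T_P2 : Disjoint T P2 := by
    rw [Finset.disjoint_left]
    intro z hz1 hz2
    rw [hmT z] at hz1
    rw [hmP2 z] at hz2
    tauto
  have dis_T_P3 : Disjoint T P3 := by
    rw [Finset.disjoint_left]
    intro z hz1 hz2
    rw [hmT z] at hz1
    rw [hmP3 z] at hz2
    tauto
  have dis_T_D : Disjoint T D := by
    rw [Finset.disjoint_left]
    intro z hz1 hz2
    rw [hmT z] at hz1
    rw [hmD z] at hz2
    tauto
  have dis_X12_X13 : Disjoint X12 X13 := by
    rw [Finset.disjoint_left]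
    intro z hz1 hz2
    rw [hmX12 z] at hz1
    rw [hmX13 z] at hz2
    tauto
  have dis_X12_X23 : Disjoint X12 X23 := by
    rw [Finset.disjoint_left]
    intro z hz1 hz2
    rw [hmX12 z] at hz1
    rw [hmX23 z] at hz2
    tauto
  have dis_X12_P1 : Disjoint X12 P1 := by
    rw [Finset.disjoint_left]
    intro z hz1 hz2
    rw [hmX12 z] at hz1
    rw [hmP1 z] at hz2
    tauto
  have dis_X12_P2 : Disjoint X12 P2 := by
    rw [Finset.disjoint_left]
    intro z hz1 hz2
    rw [hmX12 z] at hz1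
    rw [hmP2 z] at hz2
    tauto
  have dis_X12_P3 : Disjoint X12 P3 := by
    rw [Finset.disjoint_left]
    intro z hz1 hz2
    rw [hmX12 z] at hz1
    rw [hmP3 z] at hz2
    tauto
  have dis_X12_D : Disjoint X12 D := by
    rw [Finset.disjoint_left]
    intro z hz1 hz2
    rw [hmX12 z] at hz1
    rw [hmD z] at hz2
    tauto
  have dis_X13_X23 : Disjoint X13 X23 := by
    rw [Finset.disjoint_left]
    intro z hz1 hz2
    rw [hmX13 z] at hz1
    rw [hmX23 z] at hz2
    tauto
  have dis_X13_P1 : Disjoint X13 P1 := by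
    rw [Finset.disjoint_left]
    intro z hz1 hz2
    rw [hmX13 z] at hz1
    rw [hmP1 z] at hz2
    tauto
  have dis_X13_P2 : Disjoint X13 P2 := by
    rw [Finset.disjoint_left]
    intro z hz1 hz2
    rw [hmX13 z] at hz1
    rw [hmP2 z] at hz2
    tauto
  have dis_X13_P3 : Disjoint X13 P3 := by
    rw [Finset.disjoint_left]
    intro z hz1 hz2
    rw [hmX13 z] at hz1
    rw [hmP3 z] at hz2
    tauto
  have dis_X13_D : Disjoint X13 D := by
    rw [Finset.disjoint_left]
    intro z hz1 hz2
    rw [hmX13 z] at hz1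
    rw [hmD z] at hz2
    tauto
  have dis_X23_P1 : Disjoint X23 P1 := by
    rw [Finset.disjoint_left]
    intro z hz1 hz2
    rw [hmX23 z] at hz1
    rw [hmP1 z] at hz2
    tauto
  have dis_X23_P2 : Disjoint X23 P2 := by
    rw [Finset.disjoint_left]
    intro z hz1 hz2
    rw [hmX23 z] at hz1
    rw [hmP2 z] at hz2
    tauto
  have dis_X23_P3 : Disjoint X23 P3 := by
    rw [Finset.disjoint_left]
    intro z hz1 hz2
    rw [hmX23 z] at hz1
    rw [hmP3 z] at hz2
    tauto
  have dis_X23_D : Disjoint X23 D := by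
    rw [Finset.disjoint_left]
    intro z hz1 hz2
    rw [hmX23 z] at hz1
    rw [hmD z] at hz2
    tauto
  have dis_P1_P2 : Disjoint P1 P2 := by
    rw [Finset.disjoint_left]
    intro z hz1 hz2
    rw [hmP1 z] at hz1
    rw [hmP2 z] at hz2
    tauto
  have dis_P1_P3 : Disjoint P1 P3 := by
    rw [Finset.disjoint_left]
    intro z hz1 hz2
    rw [hmP1 z] at hz1
    rw [hmP3 z] at hz2
    tauto
  have dis_P1_D : Disjoint P1 D := by
    rw [Finset.disjoint_left]
    intro z hz1 hz2
    rw [hmP1 z] at hz1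
    rw [hmD z] at hz2
    tauto
  have dis_P2_P3 : Disjoint P2 P3 := by
    rw [Finset.disjoint_left]
    intro z hz1 hz2
    rw [hmP2 z] at hz1
    rw [hmP3 z] at hz2
    tauto
  have dis_P2_D : Disjoint P2 D := by
    rw [Finset.disjoint_left]
    intro z hz1 hz2
    rw [hmP2 z] at hz1
    rw [hmD z] at hz2
    tauto
  have dis_P3_D : Disjoint P3 D := by
    rw [Finset.disjoint_left]
    intro z hz1 hz2
    rw [hmP3 z] at hz1
    rw [hmD z] at hz2
    tauto
  have eS1 : S₁ = T ∪ (X12 ∪ (X13 ∪ (P1))) := by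
    ext z
    by_cases h1 : z ∈ S₁ <;> by_cases h2 : z ∈ S₂ <;> by_cases h3 : z ∈ S₃ <;>
      simp [Finset.mem_union, Finset.mem_compl, hmT z, hmX12 z, hmX13 z, hmX23 z,
        hmP1 z, hmP2 z, hmP3 z, hmD z, h1, h2, h3]
  have eS1c : S₁ᶜ = X23 ∪ (P2 ∪ (P3 ∪ (D))) := by
    ext z
    by_cases h1 : z ∈ S₁ <;> by_cases h2 : z ∈ S₂ <;> by_cases h3 : z ∈ S₃ <;>
      simp [Finset.mem_union, Finset.mem_compl, hmT z, hmX12 z, hmX13 z, hmX23 z,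
        hmP1 z, hmP2 z, hmP3 z, hmD z, h1, h2, h3]
  have eS2 : S₂ = T ∪ (X12 ∪ (X23 ∪ (P2))) := by
    ext z
    by_cases h1 : z ∈ S₁ <;> by_cases h2 : z ∈ S₂ <;> by_cases h3 : z ∈ S₃ <;>
      simp [Finset.mem_union, Finset.mem_compl, hmT z, hmX12 z, hmX13 z, hmX23 z,
        hmP1 z, hmP2 z, hmP3 z, hmD z, h1, h2, h3]
  have eS2c : S₂ᶜ = X13 ∪ (P1 ∪ (P3 ∪ (D))) := by
    ext z
    by_cases h1 : z ∈ S₁ <;> by_cases h2 : z ∈ S₂ <;> by_cases h3 : z ∈ S₃ <;>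
      simp [Finset.mem_union, Finset.mem_compl, hmT z, hmX12 z, hmX13 z, hmX23 z,
        hmP1 z, hmP2 z, hmP3 z, hmD z, h1, h2, h3]
  have eS3 : S₃ = T ∪ (X13 ∪ (X23 ∪ (P3))) := by
    ext z
    by_cases h1 : z ∈ S₁ <;> by_cases h2 : z ∈ S₂ <;> by_cases h3 : z ∈ S₃ <;>
      simp [Finset.mem_union, Finset.mem_compl, hmT z, hmX12 z, hmX13 z, hmX23 z,
        hmP1 z, hmP2 z, hmP3 z, hmD z, h1, h2, h3]
  have eS3c : S₃ᶜ = X12 ∪ (P1 ∪ (P2 ∪ (D))) := by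
    ext z
    by_cases h1 : z ∈ S₁ <;> by_cases h2 : z ∈ S₂ <;> by_cases h3 : z ∈ S₃ <;>
      simp [Finset.mem_union, Finset.mem_compl, hmT z, hmX12 z, hmX13 z, hmX23 z,
        hmP1 z, hmP2 z, hmP3 z, hmD z, h1, h2, h3]
  have eP1c : P1ᶜ = T ∪ (X12 ∪ (X13 ∪ (X23 ∪ (P2 ∪ (P3 ∪ (D)))))) := by
    ext z
    by_cases h1 : z ∈ S₁ <;> by_cases h2 : z ∈ S₂ <;> by_cases h3 : z ∈ S₃ <;>
      simp [Finset.mem_union, Finset.mem_compl, hmT z, hmX12 z, hmX13 z, hmX23 z,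
        hmP1 z, hmP2 z, hmP3 z, hmD z, h1, h2, h3]
  have eP2c : P2ᶜ = T ∪ (X12 ∪ (X13 ∪ (X23 ∪ (P1 ∪ (P3 ∪ (D)))))) := by
    ext z
    by_cases h1 : z ∈ S₁ <;> by_cases h2 : z ∈ S₂ <;> by_cases h3 : z ∈ S₃ <;>
      simp [Finset.mem_union, Finset.mem_compl, hmT z, hmX12 z, hmX13 z, hmX23 z,
        hmP1 z, hmP2 z, hmP3 z, hmD z, h1, h2, h3]
  have eP3c : P3ᶜ = T ∪ (X12 ∪ (X13 ∪ (X23 ∪ (P1 ∪ (P2 ∪ (D)))))) := by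
    ext z
    by_cases h1 : z ∈ S₁ <;> by_cases h2 : z ∈ S₂ <;> by_cases h3 : z ∈ S₃ <;>
      simp [Finset.mem_union, Finset.mem_compl, hmT z, hmX12 z, hmX13 z, hmX23 z,
        hmP1 z, hmP2 z, hmP3 z, hmD z, h1, h2, h3]
  have eTc : Tᶜ = X12 ∪ (X13 ∪ (X23 ∪ (P1 ∪ (P2 ∪ (P3 ∪ (D)))))) := by
    ext z
    by_cases h1 : z ∈ S₁ <;> by_cases h2 : z ∈ S₂ <;> by_cases h3 : z ∈ S₃ <;>
      simp [Finset.mem_union, Finset.mem_compl, hmT z, hmX12 z, hmX13 z, hmX23 z,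
        hmP1 z, hmP2 z, hmP3 z, hmD z, h1, h2, h3]
  have zf_X12_X23 : nnG G X12 X23 = 0 := by
    have hs1 : X12 ⊆ S₁ \ S₃ := by
      intro z hz
      rw [hmX12 z] at hz
      simp only [Finset.mem_sdiff]
      tauto
    have hs2 : X23 ⊆ S₃ \ S₁ := by
      intro z hz
      rw [hmX23 z] at hz
      simp only [Finset.mem_sdiff]
      tauto
    have hmo := nnG_mono G hs1 hs2
    rw [z13] at hmo
    omega
  have zf_X12_P3 : nnG G X12 P3 = 0 := by
    have hs1 : X12 ⊆ S₁ \ S₃ := by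
      intro z hz
      rw [hmX12 z] at hz
      simp only [Finset.mem_sdiff]
      tauto
    have hs2 : P3 ⊆ S₃ \ S₁ := by
      intro z hz
      rw [hmP3 z] at hz
      simp only [Finset.mem_sdiff]
      tauto
    have hmo := nnG_mono G hs1 hs2
    rw [z13] at hmo
    omega
  have zf_X13_X23 : nnG G X13 X23 = 0 := by
    have hs1 : X13 ⊆ S₁ \ S₂ := by
      intro z hz
      rw [hmX13 z] at hz
      simp only [Finset.mem_sdiff]
      tauto
    have hs2 : X23 ⊆ S₂ \ S₁ := by
      intro z hz
      rw [hmX23 z] at hz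
      simp only [Finset.mem_sdiff]
      tauto
    have hmo := nnG_mono G hs1 hs2
    rw [z12] at hmo
    omega
  have zf_X13_P2 : nnG G X13 P2 = 0 := by
    have hs1 : X13 ⊆ S₁ \ S₂ := by
      intro z hz
      rw [hmX13 z] at hz
      simp only [Finset.mem_sdiff]
      tauto
    have hs2 : P2 ⊆ S₂ \ S₁ := by
      intro z hz
      rw [hmP2 z] at hz
      simp only [Finset.mem_sdiff]
      tauto
    have hmo := nnG_mono G hs1 hs2
    rw [z12] at hmo
    omega
  have zf_P1_X23 : nnG G P1 X23 = 0 := by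
    have hs1 : P1 ⊆ S₁ \ S₂ := by
      intro z hz
      rw [hmP1 z] at hz
      simp only [Finset.mem_sdiff]
      tauto
    have hs2 : X23 ⊆ S₂ \ S₁ := by
      intro z hz
      rw [hmX23 z] at hz
      simp only [Finset.mem_sdiff]
      tauto
    have hmo := nnG_mono G hs1 hs2
    rw [z12] at hmo
    omega
  have zf_P1_P2 : nnG G P1 P2 = 0 := by
    have hs1 : P1 ⊆ S₁ \ S₂ := by
      intro z hz
      rw [hmP1 z] at hz
      simp only [Finset.mem_sdiff]
      tauto
    have hs2 : P2 ⊆ S₂ \ S₁ := by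
      intro z hz
      rw [hmP2 z] at hz
      simp only [Finset.mem_sdiff]
      tauto
    have hmo := nnG_mono G hs1 hs2
    rw [z12] at hmo
    omega
  have zf_P1_P3 : nnG G P1 P3 = 0 := by
    have hs1 : P1 ⊆ S₁ \ S₃ := by
      intro z hz
      rw [hmP1 z] at hz
      simp only [Finset.mem_sdiff]
      tauto
    have hs2 : P3 ⊆ S₃ \ S₁ := by
      intro z hz
      rw [hmP3 z] at hz
      simp only [Finset.mem_sdiff]
      tauto
    have hmo := nnG_mono G hs1 hs2
    rw [z13] at hmo
    omega
  have zf_X12_X13 : nnG G X12 X13 = 0 := by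
    have hs1 : X12 ⊆ S₂ \ S₃ := by
      intro z hz
      rw [hmX12 z] at hz
      simp only [Finset.mem_sdiff]
      tauto
    have hs2 : X13 ⊆ S₃ \ S₂ := by
      intro z hz
      rw [hmX13 z] at hz
      simp only [Finset.mem_sdiff]
      tauto
    have hmo := nnG_mono G hs1 hs2
    rw [z23] at hmo
    omega
  have zf_X23_X13 : nnG G X23 X13 = 0 := by
    have hs1 : X23 ⊆ S₂ \ S₁ := by
      intro z hz
      rw [hmX23 z] at hz
      simp only [Finset.mem_sdiff]
      tauto
    have hs2 : X13 ⊆ S₁ \ S₂ := by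
      intro z hz
      rw [hmX13 z] at hz
      simp only [Finset.mem_sdiff]
      tauto
    have hmo := nnG_mono G hs1 hs2
    rw [z21] at hmo
    omega
  have zf_X23_P1 : nnG G X23 P1 = 0 := by
    have hs1 : X23 ⊆ S₂ \ S₁ := by
      intro z hz
      rw [hmX23 z] at hz
      simp only [Finset.mem_sdiff]
      tauto
    have hs2 : P1 ⊆ S₁ \ S₂ := by
      intro z hz
      rw [hmP1 z] at hz
      simp only [Finset.mem_sdiff]
      tauto
    have hmo := nnG_mono G hs1 hs2
    rw [z21] at hmo
    omega
  have zf_P2_X13 : nnG G P2 X13 = 0 := by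
    have hs1 : P2 ⊆ S₂ \ S₁ := by
      intro z hz
      rw [hmP2 z] at hz
      simp only [Finset.mem_sdiff]
      tauto
    have hs2 : X13 ⊆ S₁ \ S₂ := by
      intro z hz
      rw [hmX13 z] at hz
      simp only [Finset.mem_sdiff]
      tauto
    have hmo := nnG_mono G hs1 hs2
    rw [z21] at hmo
    omega
  have zf_P2_P1 : nnG G P2 P1 = 0 := by
    have hs1 : P2 ⊆ S₂ \ S₁ := by
      intro z hz
      rw [hmP2 z] at hz
      simp only [Finset.mem_sdiff]
      tauto
    have hs2 : P1 ⊆ S₁ \ S₂ := by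
      intro z hz
      rw [hmP1 z] at hz
      simp only [Finset.mem_sdiff]
      tauto
    have hmo := nnG_mono G hs1 hs2
    rw [z21] at hmo
    omega
  have zf_P2_P3 : nnG G P2 P3 = 0 := by
    have hs1 : P2 ⊆ S₂ \ S₃ := by
      intro z hz
      rw [hmP2 z] at hz
      simp only [Finset.mem_sdiff]
      tauto
    have hs2 : P3 ⊆ S₃ \ S₂ := by
      intro z hz
      rw [hmP3 z] at hz
      simp only [Finset.mem_sdiff]
      tauto
    have hmo := nnG_mono G hs1 hs2
    rw [z23] at hmo
    omega
  have zf_X13_X12 : nnG G X13 X12 = 0 := by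
    have hs1 : X13 ⊆ S₃ \ S₂ := by
      intro z hz
      rw [hmX13 z] at hz
      simp only [Finset.mem_sdiff]
      tauto
    have hs2 : X12 ⊆ S₂ \ S₃ := by
      intro z hz
      rw [hmX12 z] at hz
      simp only [Finset.mem_sdiff]
      tauto
    have hmo := nnG_mono G hs1 hs2
    rw [z32] at hmo
    omega
  have zf_X23_X12 : nnG G X23 X12 = 0 := by
    have hs1 : X23 ⊆ S₃ \ S₁ := by
      intro z hz
      rw [hmX23 z] at hz
      simp only [Finset.mem_sdiff]
      tauto
    have hs2 : X12 ⊆ S₁ \ S₃ := by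
      intro z hz
      rw [hmX12 z] at hz
      simp only [Finset.mem_sdiff]
      tauto
    have hmo := nnG_mono G hs1 hs2
    rw [z31] at hmo
    omega
  have zf_P3_X12 : nnG G P3 X12 = 0 := by
    have hs1 : P3 ⊆ S₃ \ S₁ := by
      intro z hz
      rw [hmP3 z] at hz
      simp only [Finset.mem_sdiff]
      tauto
    have hs2 : X12 ⊆ S₁ \ S₃ := by
      intro z hz
      rw [hmX12 z] at hz
      simp only [Finset.mem_sdiff]
      tauto
    have hmo := nnG_mono G hs1 hs2
    rw [z31] at hmo
    omega
  have zf_P3_P1 : nnG G P3 P1 = 0 := by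
    have hs1 : P3 ⊆ S₃ \ S₁ := by
      intro z hz
      rw [hmP3 z] at hz
      simp only [Finset.mem_sdiff]
      tauto
    have hs2 : P1 ⊆ S₁ \ S₃ := by
      intro z hz
      rw [hmP1 z] at hz
      simp only [Finset.mem_sdiff]
      tauto
    have hmo := nnG_mono G hs1 hs2
    rw [z31] at hmo
    omega
  have zf_P3_P2 : nnG G P3 P2 = 0 := by
    have hs1 : P3 ⊆ S₃ \ S₂ := by
      intro z hz
      rw [hmP3 z] at hz
      simp only [Finset.mem_sdiff]
      tauto
    have hs2 : P2 ⊆ S₂ \ S₃ := by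
      intro z hz
      rw [hmP2 z] at hz
      simp only [Finset.mem_sdiff]
      tauto
    have hmo := nnG_mono G hs1 hs2
    rw [z32] at hmo
    omega
  have e1 : cutG G S₁ = nnG G T X23 + nnG G T P2 + nnG G T P3 + nnG G T D + nnG G X12 X23 + nnG G X12 P2 + nnG G X12 P3 + nnG G X12 D + nnG G X13 X23 + nnG G X13 P2 + nnG G X13 P3 + nnG G X13 D + nnG G P1 X23 + nnG G P1 P2 + nnG G P1 P3 + nnG G P1 D := by
    unfold cutG
    rw [eS1c]
    rw [nnG_add_right G S₁ X23 (P2 ∪ (P3 ∪ (D))) (Finset.disjoint_union_right.2 ⟨dis_X23_P2, (Finset.disjoint_union_right.2 ⟨dis_X23_P3, dis_X23_D⟩)⟩), nnG_add_right G S₁ P2 (P3 ∪ (D)) (Finset.disjoint_union_right.2 ⟨dis_P2_P3, dis_P2_D⟩), nnG_add_right G S₁ P3 (D) dis_P3_D]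
    conv_lhs => rw [eS1]
    rw [nnG_add_left G T (X12 ∪ (X13 ∪ (P1))) X23 (Finset.disjoint_union_right.2 ⟨dis_T_X12, (Finset.disjoint_union_right.2 ⟨dis_T_X13, dis_T_P1⟩)⟩), nnG_add_left G X12 (X13 ∪ (P1)) X23 (Finset.disjoint_union_right.2 ⟨dis_X12_X13, dis_X12_P1⟩), nnG_add_left G X13 (P1) X23 dis_X13_P1, nnG_add_left G T (X12 ∪ (X13 ∪ (P1))) P2 (Finset.disjoint_union_right.2 ⟨dis_T_X12, (Finset.disjoint_union_right.2 ⟨dis_T_X13, dis_T_P1⟩)⟩), nnG_add_left G X12 (X13 ∪ (P1)) P2 (Finset.disjoint_union_right.2 ⟨dis_X12_X13, dis_X12_P1⟩), nnG_add_left G X13 (P1) P2 dis_X13_P1, nnG_add_left G T (X12 ∪ (X13 ∪ (P1))) P3 (Finset.disjoint_union_right.2 ⟨dis_T_X12, (Finset.disjoint_union_right.2 ⟨dis_T_X13, dis_T_P1⟩)⟩), nnG_add_left G X12 (X13 ∪ (P1)) P3 (Finset.disjoint_union_right.2 ⟨dis_X12_X13, dis_X12_P1⟩), nnG_add_left G X13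 (P1) P3 dis_X13_P1, nnG_add_left G T (X12 ∪ (X13 ∪ (P1))) D (Finset.disjoint_union_right.2 ⟨dis_T_X12, (Finset.disjoint_union_right.2 ⟨dis_T_X13, dis_T_P1⟩)⟩), nnG_add_left G X12 (X13 ∪ (P1)) D (Finset.disjoint_union_right.2 ⟨dis_X12_X13, dis_X12_P1⟩), nnG_add_left G X13 (P1) D dis_X13_P1]
    ring
  have e2 : cutG G S₂ = nnG G T X13 + nnG G T P1 + nnG G T P3 + nnG G T D + nnG G X12 X13 + nnG G X12 P1 + nnG G X12 P3 + nnG G X12 D + nnG G X23 X13 + nnG G X23 P1 + nnG G X23 P3 + nnG G X23 D + nnG G P2 X13 + nnG G P2 P1 + nnG G P2 P3 + nnG G P2 D := by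
    unfold cutG
    rw [eS2c]
    rw [nnG_add_right G S₂ X13 (P1 ∪ (P3 ∪ (D))) (Finset.disjoint_union_right.2 ⟨dis_X13_P1, (Finset.disjoint_union_right.2 ⟨dis_X13_P3, dis_X13_D⟩)⟩), nnG_add_right G S₂ P1 (P3 ∪ (D)) (Finset.disjoint_union_right.2 ⟨dis_P1_P3, dis_P1_D⟩), nnG_add_right G S₂ P3 (D) dis_P3_D]
    conv_lhs => rw [eS2]
    rw [nnG_add_left G T (X12 ∪ (X23 ∪ (P2))) X13 (Finset.disjoint_union_right.2 ⟨dis_T_X12, (Finset.disjoint_union_right.2 ⟨dis_T_X23, dis_T_P2⟩)⟩), nnG_add_left G X12 (X23 ∪ (P2)) X13 (Finset.disjoint_union_right.2 ⟨dis_X12_X23, dis_X12_P2⟩), nnG_add_left G X23 (P2) X13 dis_X23_P2, nnG_add_left G T (X12 ∪ (X23 ∪ (P2))) P1 (Finset.disjoint_union_right.2 ⟨dis_T_X12, (Finset.disjoint_union_right.2 ⟨dis_T_X23, dis_T_P2⟩)⟩), nnG_add_left G X12 (X23 ∪ (P2)) P1 (Finset.disjoint_union_right.2 ⟨dis_X12_X23,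 dis_X12_P2⟩), nnG_add_left G X23 (P2) P1 dis_X23_P2, nnG_add_left G T (X12 ∪ (X23 ∪ (P2))) P3 (Finset.disjoint_union_right.2 ⟨dis_T_X12, (Finset.disjoint_union_right.2 ⟨dis_T_X23, dis_T_P2⟩)⟩), nnG_add_left G X12 (X23 ∪ (P2)) P3 (Finset.disjoint_union_right.2 ⟨dis_X12_X23, dis_X12_P2⟩), nnG_add_left G X23 (P2) P3 dis_X23_P2, nnG_add_left G T (X12 ∪ (X23 ∪ (P2))) D (Finset.disjoint_union_right.2 ⟨dis_T_X12, (Finset.disjoint_union_right.2 ⟨dis_T_X23, dis_T_P2⟩)⟩), nnG_add_left G X12 (X23 ∪ (P2)) D (Finset.disjoint_union_right.2 ⟨dis_X12_X23, dis_X12_P2⟩), nnG_add_left G X23 (P2) D dis_X23_P2]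
    ring
  have e3 : cutG G S₃ = nnG G T X12 + nnG G T P1 + nnG G T P2 + nnG G T D + nnG G X13 X12 + nnG G X13 P1 + nnG G X13 P2 + nnG G X13 D + nnG G X23 X12 + nnG G X23 P1 + nnG G X23 P2 + nnG G X23 D + nnG G P3 X12 + nnG G P3 P1 + nnG G P3 P2 + nnG G P3 D := by
    unfold cutG
    rw [eS3c]
    rw [nnG_add_right G S₃ X12 (P1 ∪ (P2 ∪ (D))) (Finset.disjoint_union_right.2 ⟨dis_X12_P1, (Finset.disjoint_union_right.2 ⟨dis_X12_P2, dis_X12_D⟩)⟩), nnG_add_right G S₃ P1 (P2 ∪ (D)) (Finset.disjoint_union_right.2 ⟨dis_P1_P2, dis_P1_D⟩), nnG_add_right G S₃ P2 (D) dis_P2_D]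
    conv_lhs => rw [eS3]
    rw [nnG_add_left G T (X13 ∪ (X23 ∪ (P3))) X12 (Finset.disjoint_union_right.2 ⟨dis_T_X13, (Finset.disjoint_union_right.2 ⟨dis_T_X23, dis_T_P3⟩)⟩), nnG_add_left G X13 (X23 ∪ (P3)) X12 (Finset.disjoint_union_right.2 ⟨dis_X13_X23, dis_X13_P3⟩), nnG_add_left G X23 (P3) X12 dis_X23_P3, nnG_add_left G T (X13 ∪ (X23 ∪ (P3))) P1 (Finset.disjoint_union_right.2 ⟨dis_T_X13, (Finset.disjoint_union_right.2 ⟨dis_T_X23, dis_T_P3⟩)⟩), nnG_add_left G X13 (X23 ∪ (P3)) P1 (Finset.disjoint_union_right.2 ⟨dis_X13_X23, dis_X13_P3⟩), nnG_add_left G X23 (P3) P1 dis_X23_P3, nnG_add_left G T (X13 ∪ (X23 ∪ (P3))) P2 (Finset.disjoint_union_right.2 ⟨dis_T_X13, (Finset.disjoint_union_right.2 ⟨dis_T_X23, dis_T_P3⟩)⟩), nnG_add_left G X13 (X23 ∪ (P3)) P2 (Finset.disjoint_union_right.2 ⟨dis_X13_X23, dis_X13_P3⟩), nnG_add_left G X23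 (P3) P2 dis_X23_P3, nnG_add_left G T (X13 ∪ (X23 ∪ (P3))) D (Finset.disjoint_union_right.2 ⟨dis_T_X13, (Finset.disjoint_union_right.2 ⟨dis_T_X23, dis_T_P3⟩)⟩), nnG_add_left G X13 (X23 ∪ (P3)) D (Finset.disjoint_union_right.2 ⟨dis_X13_X23, dis_X13_P3⟩), nnG_add_left G X23 (P3) D dis_X23_P3]
    ring
  have eP1 : cutG G P1 = nnG G P1 T + nnG G P1 X12 + nnG G P1 X13 + nnG G P1 X23 + nnG G P1 P2 + nnG G P1 P3 + nnG G P1 D := by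
    unfold cutG
    rw [eP1c]
    rw [nnG_add_right G P1 T (X12 ∪ (X13 ∪ (X23 ∪ (P2 ∪ (P3 ∪ (D)))))) (Finset.disjoint_union_right.2 ⟨dis_T_X12, (Finset.disjoint_union_right.2 ⟨dis_T_X13, (Finset.disjoint_union_right.2 ⟨dis_T_X23, (Finset.disjoint_union_right.2 ⟨dis_T_P2, (Finset.disjoint_union_right.2 ⟨dis_T_P3, dis_T_D⟩)⟩)⟩)⟩)⟩), nnG_add_right G P1 X12 (X13 ∪ (X23 ∪ (P2 ∪ (P3 ∪ (D))))) (Finset.disjoint_union_right.2 ⟨dis_X12_X13, (Finset.disjoint_union_right.2 ⟨dis_X12_X23, (Finset.disjoint_union_right.2 ⟨dis_X12_P2, (Finset.disjoint_union_right.2 ⟨dis_X12_P3, dis_X12_D⟩)⟩)⟩)⟩), nnG_add_right G P1 X13 (X23 ∪ (P2 ∪ (P3 ∪ (D)))) (Finset.disjoint_union_right.2 ⟨dis_X13_X23, (Finset.disjoint_union_right.2 ⟨dis_X13_P2, (Finset.disjoint_union_right.2 ⟨dis_X13_P3, dis_X13_D⟩)⟩)⟩), nnG_add_right G P1 X23 (P2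 ∪ (P3 ∪ (D))) (Finset.disjoint_union_right.2 ⟨dis_X23_P2, (Finset.disjoint_union_right.2 ⟨dis_X23_P3, dis_X23_D⟩)⟩), nnG_add_right G P1 P2 (P3 ∪ (D)) (Finset.disjoint_union_right.2 ⟨dis_P2_P3, dis_P2_D⟩), nnG_add_right G P1 P3 (D) dis_P3_D]
    ring
  have eP2 : cutG G P2 = nnG G P2 T + nnG G P2 X12 + nnG G P2 X13 + nnG G P2 X23 + nnG G P2 P1 + nnG G P2 P3 + nnG G P2 D := by
    unfold cutG
    rw [eP2c]
    rw [nnG_add_right G P2 T (X12 ∪ (X13 ∪ (X23 ∪ (P1 ∪ (P3 ∪ (D)))))) (Finset.disjoint_union_right.2 ⟨dis_T_X12, (Finset.disjoint_union_right.2 ⟨dis_T_X13, (Finset.disjoint_union_right.2 ⟨dis_T_X23, (Finset.disjoint_union_right.2 ⟨dis_T_P1, (Finset.disjoint_union_right.2 ⟨dis_T_P3, dis_T_D⟩)⟩)⟩)⟩)⟩), nnG_add_right G P2 X12 (X13 ∪ (X23 ∪ (P1 ∪ (P3 ∪ (D))))) (Finset.disjoint_union_right.2 ⟨dis_X12_X13,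 (Finset.disjoint_union_right.2 ⟨dis_X12_X23, (Finset.disjoint_union_right.2 ⟨dis_X12_P1, (Finset.disjoint_union_right.2 ⟨dis_X12_P3, dis_X12_D⟩)⟩)⟩)⟩), nnG_add_right G P2 X13 (X23 ∪ (P1 ∪ (P3 ∪ (D)))) (Finset.disjoint_union_right.2 ⟨dis_X13_X23, (Finset.disjoint_union_right.2 ⟨dis_X13_P1, (Finset.disjoint_union_right.2 ⟨dis_X13_P3, dis_X13_D⟩)⟩)⟩), nnG_add_right G P2 X23 (P1 ∪ (P3 ∪ (D))) (Finset.disjoint_union_right.2 ⟨dis_X23_P1, (Finset.disjoint_union_right.2 ⟨dis_X23_P3, dis_X23_D⟩)⟩), nnG_add_right G P2 P1 (P3 ∪ (D)) (Finset.disjoint_union_right.2 ⟨dis_P1_P3, dis_P1_D⟩), nnG_add_right G P2 P3 (D) dis_P3_D]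
    ring
  have eP3 : cutG G P3 = nnG G P3 T + nnG G P3 X12 + nnG G P3 X13 + nnG G P3 X23 + nnG G P3 P1 + nnG G P3 P2 + nnG G P3 D := by
    unfold cutG
    rw [eP3c]
    rw [nnG_add_right G P3 T (X12 ∪ (X13 ∪ (X23 ∪ (P1 ∪ (P2 ∪ (D)))))) (Finset.disjoint_union_right.2 ⟨dis_T_X12, (Finset.disjoint_union_right.2 ⟨dis_T_X13, (Finset.disjoint_union_right.2 ⟨dis_T_X23, (Finset.disjoint_union_right.2 ⟨dis_T_P1, (Finset.disjoint_union_right.2 ⟨dis_T_P2, dis_T_D⟩)⟩)⟩)⟩)⟩), nnG_add_right G P3 X12 (X13 ∪ (X23 ∪ (P1 ∪ (P2 ∪ (D))))) (Finset.disjoint_union_right.2 ⟨dis_X12_X13, (Finset.disjoint_union_right.2 ⟨dis_X12_X23, (Finset.disjoint_union_right.2 ⟨dis_X12_P1, (Finset.disjoint_union_right.2 ⟨dis_X12_P2, dis_X12_D⟩)⟩)⟩)⟩), nnG_add_right G P3 X13 (X23 ∪ (P1 ∪ (P2 ∪ (D)))) (Finset.disjoint_union_right.2 ⟨dis_X13_X23,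 (Finset.disjoint_union_right.2 ⟨dis_X13_P1, (Finset.disjoint_union_right.2 ⟨dis_X13_P2, dis_X13_D⟩)⟩)⟩), nnG_add_right G P3 X23 (P1 ∪ (P2 ∪ (D))) (Finset.disjoint_union_right.2 ⟨dis_X23_P1, (Finset.disjoint_union_right.2 ⟨dis_X23_P2, dis_X23_D⟩)⟩), nnG_add_right G P3 P1 (P2 ∪ (D)) (Finset.disjoint_union_right.2 ⟨dis_P1_P2, dis_P1_D⟩), nnG_add_right G P3 P2 (D) dis_P2_D]
    ring
  have eT : cutG G T = nnG G T X12 + nnG G T X13 + nnG G T X23 + nnG G T P1 + nnG G T P2 + nnG G T P3 + nnG G T D := by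
    unfold cutG
    rw [eTc]
    rw [nnG_add_right G T X12 (X13 ∪ (X23 ∪ (P1 ∪ (P2 ∪ (P3 ∪ (D)))))) (Finset.disjoint_union_right.2 ⟨dis_X12_X13, (Finset.disjoint_union_right.2 ⟨dis_X12_X23, (Finset.disjoint_union_right.2 ⟨dis_X12_P1, (Finset.disjoint_union_right.2 ⟨dis_X12_P2, (Finset.disjoint_union_right.2 ⟨dis_X12_P3, dis_X12_D⟩)⟩)⟩)⟩)⟩), nnG_add_right G T X13 (X23 ∪ (P1 ∪ (P2 ∪ (P3 ∪ (D))))) (Finset.disjoint_union_right.2 ⟨dis_X13_X23, (Finset.disjoint_union_right.2 ⟨dis_X13_P1, (Finset.disjoint_union_right.2 ⟨dis_X13_P2, (Finset.disjoint_union_right.2 ⟨dis_X13_P3, dis_X13_D⟩)⟩)⟩)⟩), nnG_add_right G T X23 (P1 ∪ (P2 ∪ (P3 ∪ (D)))) (Finset.disjoint_union_right.2 ⟨dis_X23_P1, (Finset.disjoint_union_right.2 ⟨dis_X23_P2, (Finset.disjoint_union_right.2 ⟨dis_X23_P3, dis_X23_D⟩)⟩)⟩), nnG_add_right G T P1 (P2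 ∪ (P3 ∪ (D))) (Finset.disjoint_union_right.2 ⟨dis_P1_P2, (Finset.disjoint_union_right.2 ⟨dis_P1_P3, dis_P1_D⟩)⟩), nnG_add_right G T P2 (P3 ∪ (D)) (Finset.disjoint_union_right.2 ⟨dis_P2_P3, dis_P2_D⟩), nnG_add_right G T P3 (D) dis_P3_D]
    ring
  have cm_P1_T : nnG G P1 T = nnG G T P1 := nnG_comm G P1 T
  have cm_P1_X12 : nnG G P1 X12 = nnG G X12 P1 := nnG_comm G P1 X12
  have cm_P1_X13 : nnG G P1 X13 = nnG G X13 P1 := nnG_comm G P1 X13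
  have cm_P2_T : nnG G P2 T = nnG G T P2 := nnG_comm G P2 T
  have cm_P2_X12 : nnG G P2 X12 = nnG G X12 P2 := nnG_comm G P2 X12
  have cm_P2_X23 : nnG G P2 X23 = nnG G X23 P2 := nnG_comm G P2 X23
  have cm_P3_T : nnG G P3 T = nnG G T P3 := nnG_comm G P3 T
  have cm_P3_X13 : nnG G P3 X13 = nnG G X13 P3 := nnG_comm G P3 X13
  have cm_P3_X23 : nnG G P3 X23 = nnG G X23 P3 := nnG_comm G P3 X23
  have hcp1 : 2 ≤ cutG G P1 := by
    obtain ⟨x, hx⟩ := hQ1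
    have hx1 : x ∈ S₁ := ((hmP1 x).1 hx).1
    have hun : u ∉ P1 := fun hm => ((hmP1 u).1 hm).2.1 hu2
    have h1 := cut_pos G P1 hx hun ((hr1 x hx1).symm)
    obtain ⟨a, ha⟩ := cut_even G hreg P1
    omega
  have hcp2 : 2 ≤ cutG G P2 := by
    obtain ⟨x, hx⟩ := hQ2
    have hx1 : x ∈ S₂ := ((hmP2 x).1 hx).1
    have hun : u ∉ P2 := fun hm => ((hmP2 u).1 hm).2.1 hu1
    have h1 := cut_pos G P2 hx hun ((hr2 x hx1).symm)
    obtain ⟨a, ha⟩ := cut_even G hreg P2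
    omega
  have hcp3 : 2 ≤ cutG G P3 := by
    obtain ⟨x, hx⟩ := hQ3
    have hx1 : x ∈ S₃ := ((hmP3 x).1 hx).1
    have hun : u ∉ P3 := fun hm => ((hmP3 u).1 hm).2.1 hu1
    have h1 := cut_pos G P3 hx hun ((hr3 x hx1).symm)
    obtain ⟨a, ha⟩ := cut_even G hreg P3
    omega
  have hcT : 1 ≤ cutG G T := by
    have huT : u ∈ T := (hmT u).2 ⟨hu1, hu2, hu3⟩
    have hvT : v ∉ T := fun hm => hv1 ((hmT v).1 hm).1
    exact cut_pos G T huT hvT hreach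
  omega

noncomputable def fam (G : SimpleGraph (Fin n)) (u v : Fin n) : Finset (Finset (Fin n)) :=
  Finset.univ.filter
    (fun S => u ∈ S ∧ v ∉ S ∧ (∀ x ∈ S, G.Reachable u x) ∧ cutG G S = 2)

lemma mem_fam {u v : Fin n} {S : Finset (Fin n)} :
    S ∈ fam G u v ↔ (u ∈ S ∧ v ∉ S ∧ (∀ x ∈ S, G.Reachable u x) ∧ cutG G S = 2) := by
  unfold fam
  simp

lemma cross_facts {r : ℕ} (hreg : G.IsRegularOfDegree (2 * r)) {u v : Fin n}
    (hreach : G.Reachable u v) {A B : Finset (Fin n)}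
    (hA : A ∈ fam G u v) (hB : B ∈ fam G u v) :
    A ∩ B ∈ fam G u v ∧ A ∪ B ∈ fam G u v ∧
      nnG G (A \ B) (B \ A) = 0 ∧ nnG G (B \ A) (A \ B) = 0 := by
  rw [mem_fam] at hA hB
  obtain ⟨hu1, hv1, hr1, hc1⟩ := hA
  obtain ⟨hu2, hv2, hr2, hc2⟩ := hB
  have hsub := submod G A B
  have hint1 : 1 ≤ cutG G (A ∩ B) :=
    cut_pos G _ (Finset.mem_inter.2 ⟨hu1, hu2⟩)
      (fun hm => hv1 (Finset.mem_inter.1 hm).1) hreach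
  have hun1 : 1 ≤ cutG G (A ∪ B) :=
    cut_pos G _ (Finset.mem_union_left _ hu1)
      (fun hm => (Finset.mem_union.1 hm).elim hv1 hv2) hreach
  obtain ⟨a, ha⟩ := cut_even G hreg (A ∩ B)
  obtain ⟨b, hb⟩ := cut_even G hreg (A ∪ B)
  have hiq : cutG G (A ∩ B) = 2 ∧ cutG G (A ∪ B) = 2 ∧
      nnG G (A \ B) (B \ A) = 0 ∧ nnG G (B \ A) (A \ B) = 0 := by omega
  refine ⟨?_, ?_, hiq.2.2.1, hiq.2.2.2⟩
  · rw [mem_fam]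
    exact ⟨Finset.mem_inter.2 ⟨hu1, hu2⟩, fun hm => hv1 (Finset.mem_inter.1 hm).1,
      fun x hx => hr1 x (Finset.mem_inter.1 hx).1, hiq.1⟩
  · rw [mem_fam]
    exact ⟨Finset.mem_union_left _ hu1, fun hm => (Finset.mem_union.1 hm).elim hv1 hv2,
      fun x hx => (Finset.mem_union.1 hx).elim (hr1 x) (hr2 x), hiq.2.1⟩

lemma fam_props {r : ℕ} (hr : 3 ≤ r) (hreg : G.IsRegularOfDegree (2 * r)) {u v : Fin n}
    (hreach : G.Reachable u v) (hne : (fam G u v).Nonempty) :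
    ∃ K : ℕ, (fam G u v).card * 4 ≤ K ^ 2 ∧ K * (2 * r + 1) ≤ n := by
  have hmain := TwoCut.family_count (fam G u v) (2 * r + 1) (by omega) hne
    (fun A hA B hB => (cross_facts G hreg hreach hA hB).1)
    (fun A hA B hB => (cross_facts G hreg hreach hA hB).2.1)
    (fun A hA B hB hAB => by
      -- gap
      have hcA := ((mem_fam G).1 hA).2.2.2
      have hcB := ((mem_fam G).1 hB).2.2.2
      have hle : cutG G (B \ A) ≤ 4 := by
        have := cut_sdiff_le G A B
        omega
      have hnee : (B \ A).Nonempty := by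
        obtain ⟨x, hxB, hxA⟩ := Finset.exists_of_ssubset hAB
        exact ⟨x, Finset.mem_sdiff.2 ⟨hxB, hxA⟩⟩
      exact size_bound G hr hreg _ hnee hle)
    (fun A hA => by
      have hcA := ((mem_fam G).1 hA).2.2.2
      have hu : u ∈ A := ((mem_fam G).1 hA).1
      exact size_bound G hr hreg _ ⟨u, hu⟩ (by omega))
    (fun A hA => by
      have hcA := ((mem_fam G).1 hA).2.2.2
      have hv : v ∉ A := ((mem_fam G).1 hA).2.1
      have hvc : v ∈ Finset.univ \ A := Finset.mem_sdiff.2 ⟨Finset.mem_univ v, hv⟩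
      have hcompl : Finset.univ \ A = Aᶜ := (Finset.compl_eq_univ_sdiff A).symm
      rw [hcompl]
      have hcc : cutG G Aᶜ = 2 := by rw [cutG_compl]; exact hcA
      refine size_bound G hr hreg _ ⟨v, ?_⟩ (by omega)
      rw [← hcompl]
      exact hvc)
    (fun A hA B hB C hC hAB hAC hBC hQ1 hQ2 hQ3 => by
      obtain ⟨huA, hvA, hrA, hcA⟩ := (mem_fam G).1 hA
      obtain ⟨huB, hvB, hrB, hcB⟩ := (mem_fam G).1 hB
      obtain ⟨huC, hvC, hrC, hcC⟩ := (mem_fam G).1 hC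
      have zAB := (cross_facts G hreg hreach hA hB).2.2
      have zAC := (cross_facts G hreg hreach hA hC).2.2
      have zBC := (cross_facts G hreg hreach hB hC).2.2
      exact antichain3 G hreg hreach A B C huA hvA hrA hcA huB hvB hrB hcB huC hvC hrC hcC
        zAB.1 zAB.2 zAC.1 zAC.2 zBC.1 zBC.2 hQ1 hQ2 hQ3)
  obtain ⟨K, h1, h2⟩ := hmain
  exact ⟨K, h1, by rwa [Fintype.card_fin] at h2⟩



noncomputable def sf (G : SimpleGraph (Fin n)) (u : Fin n) (F : Set (Sym2 (Fin n))) :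
    Finset (Fin n) :=
  Finset.univ.filter (fun w => (G.deleteEdges F).Reachable u w)

lemma mem_sf {u : Fin n} {F : Set (Sym2 (Fin n))} {w : Fin n} :
    w ∈ sf G u F ↔ (G.deleteEdges F).Reachable u w := by
  unfold sf
  simp

lemma sf_closed {u : Fin n} {F : Set (Sym2 (Fin n))} {x y : Fin n}
    (hx : x ∈ sf G u F) (hxy : G.Adj x y) (hne : s(x, y) ∉ F) : y ∈ sf G u F := by
  rw [mem_sf] at hx ⊢
  have hadj : (G.deleteEdges F).Adj x y := by
    rw [SimpleGraph.deleteEdges_adj]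
    exact ⟨hxy, hne⟩
  exact hx.trans hadj.reachable

lemma key_cross {u : Fin n} {F : Set (Sym2 (Fin n))} {x y : Fin n}
    (hxy : G.Adj x y) (hx : x ∈ sf G u F) (hy : y ∉ sf G u F) : s(x, y) ∈ F := by
  by_contra hne
  exact hy (sf_closed G hx hxy hne)

-- counting pairs
lemma nnG_eq_card (A B : Finset (Fin n)) :
    nnG G A B = ((Finset.univ ×ˢ Finset.univ).filter
      (fun p : Fin n × Fin n => G.Adj p.1 p.2 ∧ p.1 ∈ A ∧ p.2 ∈ B)).card := by
  rw [Finset.card_filter, Finset.sum_product]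
  rfl

lemma cut_le_two {u v : Fin n} {F : Set (Sym2 (Fin n))} (hFe : F ⊆ G.edgeSet)
    (hF2 : F.ncard = 2) : cutG G (sf G u F) ≤ 2 := by
  set S := sf G u F with hS
  have hfin : F.Finite := Set.toFinite F
  have hcard : hfin.toFinset.card = 2 := by
    rw [← Set.ncard_eq_toFinset_card F hfin]
    exact hF2
  rw [cutG, nnG_eq_card]
  rw [← hcard]
  refine Finset.card_le_card_of_injOn (fun p : Fin n × Fin n => Sym2.mk p.1 p.2) ?_ ?_
  · intro p hp
    rw [Finset.mem_coe, Finset.mem_filter] at hp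
    obtain ⟨x, y⟩ := p
    have hcross : s(x, y) ∈ F := key_cross G hp.2.1 hp.2.2.1
      (by have := hp.2.2.2; rwa [Finset.mem_compl] at this)
    rw [Finset.mem_coe, Set.Finite.mem_toFinset]
    exact hcross
  · intro p hp q hq heq
    rw [Finset.mem_coe, Finset.mem_filter] at hp hq
    obtain ⟨x, y⟩ := p
    obtain ⟨x', y'⟩ := q
    simp only [Sym2.eq_iff] at heq
    rcases heq with ⟨h1, h2⟩ | ⟨h1, h2⟩
    · rw [h1, h2]
    · exfalso
      have h3 := hq.2.2.2
      rw [Finset.mem_compl] at h3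
      apply h3
      rw [← h1]
      exact hp.2.2.1





variable {n : ℕ} (G : SimpleGraph (Fin n))

lemma sf_mem_fam {u v : Fin n} (hreach : G.Reachable u v) {r : ℕ}
    (hreg : G.IsRegularOfDegree (2 * r)) {F : Set (Sym2 (Fin n))}
    (hFe : F ⊆ G.edgeSet) (hF2 : F.ncard = 2)
    (hFr : ¬ (G.deleteEdges F).Reachable u v) : sf G u F ∈ fam G u v := by
  rw [mem_fam]
  refine ⟨(mem_sf G).2 (SimpleGraph.Reachable.refl u), fun hv => hFr ((mem_sf G).1 hv), ?_, ?_⟩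
  · intro x hx
    exact SimpleGraph.Reachable.mono (SimpleGraph.deleteEdges_le F) ((mem_sf G).1 hx)
  · have h1 := cut_pos G (sf G u F) ((mem_sf G).2 (SimpleGraph.Reachable.refl u))
      (fun hv => hFr ((mem_sf G).1 hv)) hreach
    have h2 := cut_le_two G (u := u) (v := v) hFe hF2
    obtain ⟨a, ha⟩ := cut_even G hreg (sf G u F)
    omega

lemma F_eq_crs {u : Fin n} {F : Set (Sym2 (Fin n))} (hFe : F ⊆ G.edgeSet) (hF2 : F.ncard = 2)
    (hcut : cutG G (sf G u F) = 2) :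
    F = {e : Sym2 (Fin n) | e ∈ G.edgeSet ∧
      ∃ x y : Fin n, e = s(x, y) ∧ x ∈ sf G u F ∧ y ∉ sf G u F} := by
  set S := sf G u F with hSdef
  have hfin : F.Finite := Set.toFinite F
  set CRS : Finset (Sym2 (Fin n)) :=
    G.edgeFinset.filter (fun e => ∃ x y : Fin n, e = s(x, y) ∧ x ∈ S ∧ y ∉ S) with hCRS
  have hsub : CRS ⊆ hfin.toFinset := by
    intro e he
    rw [hCRS, Finset.mem_filter] at he
    obtain ⟨heE, x, y, rfl, hx, hy⟩ := he
    rw [Set.Finite.mem_toFinset]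
    have hadj : G.Adj x y := by
      rw [SimpleGraph.mem_edgeFinset, SimpleGraph.mem_edgeSet] at heE
      exact heE
    exact key_cross G hadj hx hy
  have hcardCRS : CRS.card = cutG G S := by
    rw [cutG, nnG_eq_card]
    symm
    refine Finset.card_bij (fun (p : Fin n × Fin n) _ => Sym2.mk p.1 p.2) ?_ ?_ ?_
    · intro p hp
      rw [Finset.mem_filter] at hp
      obtain ⟨x, y⟩ := p
      have hyc : y ∉ S := by
        have := hp.2.2.2
        rwa [Finset.mem_compl] at this
      rw [hCRS, Finset.mem_filter]
      refine ⟨SimpleGraph.mem_edgeFinset.2 ((SimpleGraph.mem_edgeSet G).2 hp.2.1),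
        ⟨x, y, rfl, hp.2.2.1, hyc⟩⟩
    · intro p hp q hq heq
      rw [Finset.mem_filter] at hp hq
      obtain ⟨x, y⟩ := p
      obtain ⟨x', y'⟩ := q
      simp only [Sym2.eq_iff] at heq
      rcases heq with ⟨h1, h2⟩ | ⟨h1, h2⟩
      · rw [h1, h2]
      · exfalso
        have h3 := hq.2.2.2
        rw [Finset.mem_compl] at h3
        apply h3
        rw [← h1]
        exact hp.2.2.1
    · intro e he
      rw [hCRS, Finset.mem_filter] at he
      obtain ⟨heE, x, y, rfl, hx, hy⟩ := he
      refine ⟨(x, y), ?_, rfl⟩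
      rw [Finset.mem_filter]
      refine ⟨Finset.mem_product.2 ⟨Finset.mem_univ _, Finset.mem_univ _⟩, ?_, hx, ?_⟩
      · rw [← SimpleGraph.mem_edgeSet (G := G)]
        rw [SimpleGraph.mem_edgeFinset] at heE
        exact heE
      · rw [Finset.mem_compl]
        exact hy
  have hFt : CRS = hfin.toFinset := by
    apply Finset.eq_of_subset_of_card_le hsub
    rw [hcardCRS, hcut, ← Set.ncard_eq_toFinset_card F hfin, hF2]
  have hcoe : (↑CRS : Set (Sym2 (Fin n))) = F := by
    rw [hFt, Set.Finite.coe_toFinset]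
  rw [← hcoe]
  ext e
  rw [Finset.mem_coe, hCRS, Finset.mem_filter, SimpleGraph.mem_edgeFinset, Set.mem_setOf_eq]

lemma sf_inj {u : Fin n} {F F' : Set (Sym2 (Fin n))}
    (hFe : F ⊆ G.edgeSet) (hF'e : F' ⊆ G.edgeSet) (hF2 : F.ncard = 2) (hF'2 : F'.ncard = 2)
    (hcut : cutG G (sf G u F) = 2) (hcut' : cutG G (sf G u F') = 2)
    (heq : sf G u F = sf G u F') : F = F' := by
  rw [F_eq_crs G hFe hF2 hcut, F_eq_crs G hF'e hF'2 hcut', heq]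



end TwoCutG




open TwoCutG


/-- Let `G` be a `2r`-regular simple graph on `n` vertices with `r ≥ 3`,
and let `u ≠ v` be vertices in the same connected component.  Then the number of
2-edge-cuts of `G` separating `u` and `v` is at most `n² / (4r+2)²`. -/
theorem two_edge_cuts_bound_large_degree (r n : ℕ) (hr : 3 ≤ r)
    (G : SimpleGraph (Fin n)) (hreg : G.IsRegularOfDegree (2 * r))
    (u v : Fin n) (huv : u ≠ v) (hreach : G.Reachable u v) :
    (Set.ncard {F : Set (Sym2 (Fin n)) | F ⊆ G.edgeSet ∧ F.ncard = 2 ∧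
        ¬ (G.deleteEdges F).Reachable u v} : ℝ) ≤ (n : ℝ) ^ 2 / (4 * (r : ℝ) + 2) ^ 2 := by
  classical
  have hpos : (0:ℝ) < (4 * (r:ℝ) + 2) ^ 2 := by positivity
  rw [le_div_iff₀ hpos]
  set CC : Set (Set (Sym2 (Fin n))) := {F | F ⊆ G.edgeSet ∧ F.ncard = 2 ∧
    ¬ (G.deleteEdges F).Reachable u v} with hCC
  rcases Set.eq_empty_or_nonempty CC with hE | hNE
  · rw [hE]
    simp only [Set.ncard_empty, Nat.cast_zero, zero_mul]
    positivity
  · have hCCmem : ∀ F ∈ CC, F ⊆ G.edgeSet ∧ F.ncard = 2 ∧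
        ¬ (G.deleteEdges F).Reachable u v := by
      intro F hF
      rw [hCC, Set.mem_setOf_eq] at hF
      exact hF
    have hmapsto : ∀ F ∈ CC, sf G u F ∈ fam G u v := by
      intro F hF
      obtain ⟨h1, h2, h3⟩ := hCCmem F hF
      exact sf_mem_fam G hreach hreg h1 h2 h3
    have hinj : Set.InjOn (sf G u) CC := by
      intro F hF F' hF' heq
      have hc : cutG G (sf G u F) = 2 := ((mem_fam G).1 (hmapsto F hF)).2.2.2
      have hc' : cutG G (sf G u F') = 2 := ((mem_fam G).1 (hmapsto F' hF')).2.2.2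
      exact sf_inj G (hCCmem F hF).1 (hCCmem F' hF').1 (hCCmem F hF).2.1
        (hCCmem F' hF').2.1 hc hc' heq
    have h1 : CC.ncard = ((sf G u) '' CC).ncard := (Set.ncard_image_of_injOn hinj).symm
    have h2 : ((sf G u) '' CC).ncard ≤ ((fam G u v : Finset (Finset (Fin n))) :
        Set (Finset (Fin n))).ncard := by
      apply Set.ncard_le_ncard
      · rintro S ⟨F, hF, rfl⟩
        rw [Finset.mem_coe]
        exact hmapsto F hF
      · exact (fam G u v).finite_toSet
    have h3 : ((fam G u v : Finset (Finset (Fin n))) : Set (Finset (Fin n))).ncard =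
        (fam G u v).card := Set.ncard_coe_finset _
    have hfamne : (fam G u v).Nonempty := by
      obtain ⟨F, hF⟩ := hNE
      exact ⟨_, hmapsto F hF⟩
    obtain ⟨K, hK1, hK2⟩ := fam_props G hr hreg hreach hfamne
    have htn : CC.ncard ≤ (fam G u v).card := by omega
    have hnat : CC.ncard * (4 * r + 2) ^ 2 ≤ n ^ 2 := by
      have e1 : CC.ncard * (4 * r + 2) ^ 2 = CC.ncard * 4 * (2 * r + 1) ^ 2 := by ring
      calc CC.ncard * (4 * r + 2) ^ 2 = CC.ncard * 4 * (2 * r + 1) ^ 2 := e1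
        _ ≤ K ^ 2 * (2 * r + 1) ^ 2 := Nat.mul_le_mul_right _ (by
            have : CC.ncard * 4 ≤ (fam G u v).card * 4 := by omega
            omega)
        _ = (K * (2 * r + 1)) ^ 2 := by ring
        _ ≤ n ^ 2 := Nat.pow_le_pow_left hK2 2
    exact_mod_cast hnat
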